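/- arXiv:2408.08718 — 6 statements merged into one kernel-verified Lean document; each statement's English description precedes it below -/
import Mathlib

section
/- Let r ≥ 1 and let e_k = e_k(x_1,…,x_r) denote the k-th elementary symmetric polynomial in ℤ[x_1,…,x_r], with the conventions e_0 = 1 and e_k = 0 for k < 0 or k > r. Then ∏_{1≤i<j≤r} (x_i + x_j) = det M, where M is the (r−1)×(r−1) matrix with entries M_{ij} = e_{r−2i+j}(x_1,…,x_r) for 1 ≤ i, j ≤ r−1 (for r = 1 both sides are the empty product 1). -/
open MvPolynomial

/-- The `k`-th elementary symmetric polynomial in `r` variables over `ℤ`, with the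
conventions `e_0 = 1` and `e_k = 0` for `k < 0` (the vanishing for `k > r` already
holds for `MvPolynomial.esymm`). -/
noncomputable def esymmZ (r : ℕ) (k : ℤ) : MvPolynomial (Fin r) ℤ :=
  if 0 ≤ k then esymm (Fin r) ℤ k.toNat else 0

namespace JTaux

open Finset



variable {β : Type*} [CommMonoid β]

lemma prod_pairs {N : ℕ} (f : Fin N → Fin N → β) :
    ∏ p ∈ univ.filter (fun p : Fin N × Fin N => p.1 < p.2), f p.1 p.2
      = ∏ i, ∏ j ∈ Ioi i, f i j := by
  rw [prod_filter, Fintype.prod_prod_type]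
  refine Finset.prod_congr rfl fun i _ => ?_
  rw [show Ioi i = univ.filter (fun j => i < j) by ext j; simp, prod_filter]

lemma prod_erase_split {N : ℕ} (f : Fin N → Fin N → β) :
    ∏ k, ∏ m ∈ univ.erase k, f k m
      = (∏ i, ∏ j ∈ Ioi i, f i j) * (∏ i, ∏ j ∈ Ioi i, f j i) := by
  have h1 : ∀ k : Fin N, univ.erase k = (Ioi k).disjUnion (Iio k) (disjoint_Ioi_Iio k) := by
    intro k
    ext m
    simp only [mem_erase, mem_univ, and_true, disjUnion_eq_union, mem_union, mem_Ioi, mem_Iio]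
    exact ⟨fun h => h.lt_or_gt.symm, fun h => h.elim (fun h => h.ne') fun h => h.ne⟩
  simp_rw [h1, prod_disjUnion, prod_mul_distrib]
  congr 1
  refine prod_comm' fun k m => ?_
  simp only [mem_univ, mem_Iio, mem_Ioi, true_and, and_true]




noncomputable section

abbrev Rr (n : ℕ) := MvPolynomial (Fin (n + 1)) ℤ

variable (n : ℕ)

lemma esymm_eq_zero_of_card_lt {k : ℕ} (hk : n + 1 < k) :
    esymm (Fin (n + 1)) ℤ k = 0 := by
  rw [esymm, Finset.powersetCard_eq_empty.2 (by simpa using hk), Finset.sum_empty]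

lemma esymmZ_neg {z : ℤ} (hz : z < 0) : esymmZ (n + 1) z = 0 := if_neg (not_le.2 hz)

lemma esymmZ_gt {z : ℤ} (hz : (n + 1 : ℤ) < z) : esymmZ (n + 1) z = 0 := by
  rw [esymmZ, if_pos (le_of_lt (lt_trans (by positivity) hz))]
  exact esymm_eq_zero_of_card_lt n (by omega)

lemma esymmZ_nonneg {z : ℤ} (hz : 0 ≤ z) : esymmZ (n + 1) z = esymm (Fin (n+1)) ℤ z.toNat :=
  if_pos hz

/-- the generating polynomial `∏ (t + xₘ)`. -/
def F : Polynomial (Rr n) := ∏ m : Fin (n + 1), (Polynomial.X + Polynomial.C (X m))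

/-- `g x k = ∏_{m ≠ k} (t - x m)`. -/
def g (x : Fin (n + 1) → Rr n) (k : Fin (n + 1)) : Polynomial (Rr n) :=
  ∏ m ∈ univ.erase k, (Polynomial.X - Polynomial.C (x m))

lemma natDegree_F : (F n).natDegree = n + 1 := by
  rw [F, Polynomial.natDegree_prod _ _ (fun m _ => Polynomial.X_add_C_ne_zero (X m))]
  simp [Polynomial.natDegree_X_add_C]

lemma coeff_F {m : ℕ} (hm : m ≤ n + 1) :
    (F n).coeff m = esymm (Fin (n + 1)) ℤ (n + 1 - m) := by
  have := MvPolynomial.prod_X_add_C_coeff (σ := Fin (n + 1)) (R := ℤ) m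
    (by simpa using hm)
  simpa [F, Fintype.card_fin] using this

lemma coeff_F_zero {m : ℕ} (hm : n + 1 < m) : (F n).coeff m = 0 :=
  Polynomial.coeff_eq_zero_of_natDegree_lt (by rw [natDegree_F]; exact hm)

lemma natDegree_g (x : Fin (n + 1) → Rr n) (k : Fin (n + 1)) : (g n x k).natDegree = n := by
  rw [g, Polynomial.natDegree_prod _ _ (fun m _ => Polynomial.X_sub_C_ne_zero (x m))]
  simp [Polynomial.natDegree_X_sub_C, Finset.card_erase_of_mem]

lemma coeff_g_zero (x : Fin (n + 1) → Rr n) (k : Fin (n + 1)) {j : ℕ} (hj : n < j) :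
    (g n x k).coeff j = 0 :=
  Polynomial.coeff_eq_zero_of_natDegree_lt (by rw [natDegree_g]; exact hj)

/-- the key product identity `F · g k = (t + x_k) · (∏_{m≠k} (t² - x_m²))`. -/
lemma F_mul_g (k : Fin (n + 1)) :
    F n * g n X k =
      (Polynomial.X + Polynomial.C (X k)) *
        Polynomial.expand (Rr n) 2 (g n (fun m => X m ^ 2) k) := by
  rw [F, ← Finset.mul_prod_erase _ _ (Finset.mem_univ k), g, mul_assoc,
    ← Finset.prod_mul_distrib, g, map_prod]
  congr 1
  refine Finset.prod_congr rfl fun m _ => ?_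
  simp only [map_sub, map_pow, Polynomial.expand_C, Polynomial.expand_X, Polynomial.C_pow]
  ring

def Mmat : Matrix (Fin (n + 1)) (Fin (n + 1)) (Rr n) :=
  Matrix.of fun i j => esymmZ (n + 1) ((n : ℤ) - 2 * ((i : ℕ) : ℤ) + ((j : ℕ) : ℤ))

def Bmat (x : Fin (n + 1) → Rr n) : Matrix (Fin (n + 1)) (Fin (n + 1)) (Rr n) :=
  Matrix.of fun j k => (g n x k).coeff j

lemma coeff_F_mul_g (i k : Fin (n + 1)) :
    (F n * g n X k).coeff (2 * (i : ℕ) + 1) = (g n (fun m => X m ^ 2) k).coeff i := by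
  rw [F_mul_g, add_mul, Polynomial.coeff_add, Polynomial.coeff_X_mul, Polynomial.coeff_C_mul,
    Polynomial.coeff_expand (by norm_num : 0 < 2), Polynomial.coeff_expand (by norm_num : 0 < 2),
    if_neg (by omega : ¬ (2 ∣ 2 * (i : ℕ) + 1)), if_pos ⟨(i : ℕ), rfl⟩]
  simp [Nat.mul_div_cancel_left]

lemma Mmat_mul_Bmat : Mmat n * Bmat n X = Bmat n (fun m => X m ^ 2) := by
  refine Matrix.ext fun i k => ?_
  rw [Matrix.mul_apply]
  show _ = (g n (fun m => X m ^ 2) k).coeff i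
  rw [← coeff_F_mul_g n i k,
    mul_comm (F n) _, Polynomial.coeff_mul,
    Finset.Nat.sum_antidiagonal_eq_sum_range_succ
      (fun a b => (g n X k).coeff a * (F n).coeff b)]
  set N := 2 * (i : ℕ) + 1 with hN
  have hl : ∑ j : Fin (n+1), Mmat n i j * Bmat n X j k
      = ∑ j ∈ Finset.range (n+1),
          esymmZ (n + 1) ((n : ℤ) - 2 * ((i : ℕ) : ℤ) + (j : ℤ)) * (g n X k).coeff j := by
    rw [← Fin.sum_univ_eq_sum_range
      (fun j => esymmZ (n + 1) ((n : ℤ) - 2 * ((i : ℕ) : ℤ) + (j : ℤ)) * (g n X k).coeff j) (n+1)]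
    rfl
  rw [hl]
  have e1 : ∑ j ∈ Finset.range (n+1),
        esymmZ (n + 1) ((n : ℤ) - 2 * ((i : ℕ) : ℤ) + (j : ℤ)) * (g n X k).coeff j
      = ∑ j ∈ Finset.range (min (n+1) (N+1)),
          esymmZ (n + 1) ((n : ℤ) - 2 * ((i : ℕ) : ℤ) + (j : ℤ)) * (g n X k).coeff j := by
    refine (Finset.sum_subset (Finset.range_subset_range.2 (min_le_left _ _)) ?_).symm
    intro j hj hj2
    simp only [Finset.mem_range] at hj hj2
    exact mul_eq_zero_of_left (esymmZ_gt n (by omega)) _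
  have e2 : ∑ j ∈ Finset.range (N+1), (g n X k).coeff j * (F n).coeff (N - j)
      = ∑ j ∈ Finset.range (min (n+1) (N+1)), (g n X k).coeff j * (F n).coeff (N - j) := by
    refine (Finset.sum_subset (Finset.range_subset_range.2 (min_le_right _ _)) ?_).symm
    intro j hj hj2
    simp only [Finset.mem_range] at hj hj2
    exact mul_eq_zero_of_left (coeff_g_zero n X k (by omega)) _
  rw [e1, e2]
  refine Finset.sum_congr rfl fun j hj => ?_
  simp only [Finset.mem_range] at hj
  rcases le_or_gt 0 ((n : ℤ) - 2 * ((i : ℕ) : ℤ) + (j : ℤ)) with hz | hz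
  · rw [esymmZ_nonneg n hz, coeff_F n (by omega : N - j ≤ n + 1), mul_comm]
    congr 2
    omega
  · rw [esymmZ_neg n hz, coeff_F_zero n (by omega : n + 1 < N - j)]
    ring

lemma Vmat_mul_Bmat (x : Fin (n + 1) → Rr n) :
    Matrix.vandermonde x * Bmat n x
      = Matrix.diagonal (fun k => ∏ m ∈ univ.erase k, (x k - x m)) := by
  refine Matrix.ext fun l k => ?_
  rw [Matrix.mul_apply]
  have h : ∑ j : Fin (n+1), Matrix.vandermonde x l j * Bmat n x j k
      = Polynomial.eval (x l) (g n x k) := by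
    rw [Polynomial.eval_eq_sum_range'
      (lt_of_le_of_lt (le_of_eq (natDegree_g n x k)) (Nat.lt_succ_self n)) (x l),
      ← Fin.sum_univ_eq_sum_range (fun j => (g n x k).coeff j * x l ^ j) (n+1)]
    exact Finset.sum_congr rfl fun j _ => by
      rw [Matrix.vandermonde_apply, Bmat, Matrix.of_apply]; exact mul_comm _ _
  rw [h, g, Polynomial.eval_prod]
  simp only [Polynomial.eval_sub, Polynomial.eval_X, Polynomial.eval_C]
  by_cases hlk : l = k
  · subst hlk; rw [Matrix.diagonal_apply_eq]
  · rw [Matrix.diagonal_apply_ne _ hlk]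
    exact Finset.prod_eq_zero (Finset.mem_erase.2 ⟨hlk, Finset.mem_univ l⟩) (sub_self _)

end

end JTaux


set_option maxHeartbeats 1000000 in
open Finset in
/-- **Second Jacobi–Trudi formula for the staircase partition.**
For `r ≥ 1`, `∏_{1 ≤ i < j ≤ r} (x_i + x_j) = det M`, where `M` is the
`(r−1) × (r−1)` matrix with entries `M_{ij} = e_{r−2i+j}(x_1,…,x_r)`
for `1 ≤ i, j ≤ r−1`. -/
theorem jacobi_trudi_staircase (r : ℕ) (hr : 1 ≤ r) :
    (∏ p ∈ Finset.univ.filter (fun p : Fin r × Fin r => p.1 < p.2), (X p.1 + X p.2)) =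
      Matrix.det (Matrix.of fun i j : Fin (r - 1) =>
        esymmZ r ((r : ℤ) - 2 * ((i : ℤ) + 1) + ((j : ℤ) + 1))) := by
  obtain ⟨n, rfl⟩ : ∃ n, r = n + 1 := ⟨r - 1, by omega⟩
  set P : JTaux.Rr n := ∏ i, ∏ j ∈ Ioi i, (X i + X j) with hPdef
  set v : JTaux.Rr n := ∏ i, ∏ j ∈ Ioi i, (X j - X i) with hvdef
  set D : JTaux.Rr n := ∏ k, ∏ m ∈ univ.erase k, (X k - X m) with hDdef
  set Dsq : JTaux.Rr n := ∏ k, ∏ m ∈ univ.erase k, (X k ^ 2 - X m ^ 2) with hDsqdef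
  set Vsq : JTaux.Rr n := ∏ i, ∏ j ∈ Ioi i, ((X j : JTaux.Rr n) ^ 2 - X i ^ 2) with hVsqdef
  -- step 1 : the left-hand side is `P`
  rw [JTaux.prod_pairs (fun i j => (X i : JTaux.Rr n) + X j)]
  -- step 2 : the right-hand side is `det (Mmat n)`
  have hsub : (Matrix.of fun i j : Fin (n + 1 - 1) =>
      esymmZ (n + 1) (((n + 1 : ℕ) : ℤ) - 2 * ((i : ℤ) + 1) + ((j : ℤ) + 1)))
      = (JTaux.Mmat n).submatrix Fin.castSucc Fin.castSucc := by
    refine Matrix.ext fun i j => ?_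
    show esymmZ _ _ = esymmZ _ _
    congr 1
    push_cast [Fin.coe_castSucc]
    ring
  have hdet : Matrix.det (Matrix.of fun i j : Fin (n + 1 - 1) =>
      esymmZ (n + 1) (((n + 1 : ℕ) : ℤ) - 2 * ((i : ℤ) + 1) + ((j : ℤ) + 1)))
      = (JTaux.Mmat n).det := by
    rw [hsub, Matrix.det_succ_row (JTaux.Mmat n) (Fin.last n),
      Finset.sum_eq_single (Fin.last n)]
    · rw [Fin.succAbove_last]
      have h1 : JTaux.Mmat n (Fin.last n) (Fin.last n) = 1 := by
        show esymmZ (n + 1) _ = 1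
        rw [show ((n : ℤ) - 2 * (((Fin.last n : Fin (n+1)) : ℕ) : ℤ)
            + (((Fin.last n : Fin (n+1)) : ℕ) : ℤ)) = 0 by rw [Fin.val_last]; ring]
        rw [esymmZ, if_pos le_rfl, Int.toNat_zero, MvPolynomial.esymm_zero]
      rw [h1, Fin.val_last, ← two_mul, pow_mul]
      simp only [neg_one_sq, one_pow, one_mul, mul_one]
    · intro j _ hj
      have h0 : JTaux.Mmat n (Fin.last n) j = 0 := by
        show esymmZ (n + 1) _ = 0
        refine JTaux.esymmZ_neg n ?_
        rw [Fin.val_last]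
        have := Fin.val_lt_last hj
        omega
      rw [h0]; ring
    · intro h; exact absurd (Finset.mem_univ _) h
  rw [hdet]
  -- step 3 : the three matrix identities, at the level of determinants
  have d0 : (JTaux.Mmat n).det * (JTaux.Bmat n X).det
      = (JTaux.Bmat n (fun m => X m ^ 2)).det := by
    rw [← Matrix.det_mul, JTaux.Mmat_mul_Bmat]
  have d1 : v * (JTaux.Bmat n X).det = D := by
    rw [hvdef, ← Matrix.det_vandermonde (X : Fin (n+1) → JTaux.Rr n), ← Matrix.det_mul,
      JTaux.Vmat_mul_Bmat, Matrix.det_diagonal, hDdef]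
  have d2 : Vsq * (JTaux.Bmat n (fun m => X m ^ 2)).det = Dsq := by
    rw [hVsqdef, ← Matrix.det_vandermonde (fun m => (X m : JTaux.Rr n) ^ 2), ← Matrix.det_mul,
      JTaux.Vmat_mul_Bmat, Matrix.det_diagonal, hDsqdef]
  -- step 4 : factorizations
  have hee : (∏ k, ∏ m ∈ univ.erase k, ((X k : JTaux.Rr n) + X m)) = P * P := by
    rw [JTaux.prod_erase_split (fun k m => (X k : JTaux.Rr n) + X m), hPdef]
    have h2 : (∏ i, ∏ j ∈ Ioi i, ((X j : JTaux.Rr n) + X i))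
        = ∏ i, ∏ j ∈ Ioi i, ((X i : JTaux.Rr n) + X j) :=
      Finset.prod_congr rfl fun i _ => Finset.prod_congr rfl fun j _ => add_comm _ _
    rw [h2]
  have hDsq : Dsq = D * (P * P) := by
    rw [hDsqdef, hDdef, ← hee]
    rw [show (∏ k, ∏ m ∈ univ.erase k, ((X k : JTaux.Rr n) ^ 2 - X m ^ 2))
        = ∏ k, ∏ m ∈ univ.erase k, ((X k - X m) * (X k + X m)) from
      Finset.prod_congr rfl fun k _ => Finset.prod_congr rfl fun m _ => by ring]
    simp_rw [Finset.prod_mul_distrib]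
  have hVsq : Vsq = v * P := by
    rw [hVsqdef, hvdef, hPdef]
    rw [show (∏ i, ∏ j ∈ Ioi i, ((X j : JTaux.Rr n) ^ 2 - X i ^ 2))
        = ∏ i, ∏ j ∈ Ioi i, ((X j - X i) * (X i + X j)) from
      Finset.prod_congr rfl fun i _ => Finset.prod_congr rfl fun j _ => by ring]
    simp_rw [Finset.prod_mul_distrib]
  -- step 5 : combine
  have step1 : (JTaux.Mmat n).det * D * Vsq = Dsq * v := by
    calc (JTaux.Mmat n).det * D * Vsq
        = v * (Vsq * ((JTaux.Mmat n).det * (JTaux.Bmat n X).det)) := by rw [← d1]; ring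
      _ = v * (Vsq * (JTaux.Bmat n (fun m => X m ^ 2)).det) := by rw [d0]
      _ = Dsq * v := by rw [d2]; ring
  rw [hDsq, hVsq] at step1
  have key : ((JTaux.Mmat n).det - P) * (D * (v * P)) = 0 := by linear_combination step1
  -- step 6 : the cofactor is nonzero
  have hpow : ∀ a b : Fin (n + 1), a ≠ b → (3 : ℤ) ^ (a : ℕ) - 3 ^ (b : ℕ) ≠ 0 := by
    intro a b hab
    have h3 : (1 : ℤ) < 3 := by norm_num
    rcases hab.lt_or_gt with h | h
    · exact sub_ne_zero.2 (pow_lt_pow_right₀ h3 h).ne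
    · exact sub_ne_zero.2 (pow_lt_pow_right₀ h3 h).ne'
  have hne : D * (v * P) ≠ 0 := by
    intro h0
    have := congrArg (MvPolynomial.eval (fun i : Fin (n + 1) => (3 : ℤ) ^ (i : ℕ))) h0
    rw [map_zero, map_mul, map_mul] at this
    rcases mul_eq_zero.1 this with h | h
    · rw [hDdef, map_prod] at h
      obtain ⟨k, -, hk⟩ := Finset.prod_eq_zero_iff.1 h
      rw [map_prod] at hk
      obtain ⟨m, hm, hm0⟩ := Finset.prod_eq_zero_iff.1 hk
      simp only [map_sub, MvPolynomial.eval_X] at hm0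
      exact hpow k m (Finset.mem_erase.1 hm).1.symm hm0
    rcases mul_eq_zero.1 h with h | h
    · rw [hvdef, map_prod] at h
      obtain ⟨i, -, hi⟩ := Finset.prod_eq_zero_iff.1 h
      rw [map_prod] at hi
      obtain ⟨j, hj, hj0⟩ := Finset.prod_eq_zero_iff.1 hi
      simp only [map_sub, MvPolynomial.eval_X] at hj0
      exact hpow j i (Finset.mem_Ioi.1 hj).ne' hj0
    · rw [hPdef, map_prod] at h
      obtain ⟨i, -, hi⟩ := Finset.prod_eq_zero_iff.1 h
      rw [map_prod] at hi
      obtain ⟨j, hj, hj0⟩ := Finset.prod_eq_zero_iff.1 hi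
      simp only [map_add, MvPolynomial.eval_X] at hj0
      have : (0 : ℤ) < 3 ^ (i : ℕ) + 3 ^ (j : ℕ) := by positivity
      exact this.ne' hj0
  rcases mul_eq_zero.1 key with h | h
  · exact (sub_eq_zero.1 h).symm
  · exact absurd h hne
end

section
/- Let g ≥ 1. The 2^{g−1} classes λ_J := ∏_{j∈J} λ_j, for J ranging over all subsets of {1,…,g−1}, form a basis of ℛ_g as a ℚ-vector space; in particular dim_ℚ ℛ_g = 2^{g−1}. -/
open MvPolynomial

noncomputable section

/-- The class `λ_m` in `ℚ[λ_1, …, λ_h]`, with the conventions `λ_0 = 1` and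
`λ_m = 0` for `m > h`.  Here `λ_m` for `1 ≤ m ≤ h` is the variable `X ⟨m-1⟩`. -/
def lam (h m : ℕ) : MvPolynomial (Fin h) ℚ :=
  if _h0 : m = 0 then 1
  else if _hm : m ≤ h then X ⟨m - 1, by omega⟩ else 0

/-- The degree-`d` Mumford relation `m_d = Σ_{i+j=d} (−1)^j λ_i λ_j`. -/
def mumford (h d : ℕ) : MvPolynomial (Fin h) ℚ :=
  ∑ i ∈ Finset.range (d + 1), (-1 : MvPolynomial (Fin h) ℚ) ^ (d - i) * lam h i * lam h (d - i)

/-- The Mumford ideal `I_h`, generated by the relations `m_d` for `1 ≤ d ≤ 2h`. -/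
def mumfordIdeal (h : ℕ) : Ideal (MvPolynomial (Fin h) ℚ) :=
  Ideal.span (mumford h '' Set.Icc 1 (2 * h))

/-- `𝒬_h = ℚ[λ_1,…,λ_h]/I_h`. -/
abbrev Qring (h : ℕ) := MvPolynomial (Fin h) ℚ ⧸ mumfordIdeal h

/-- The ideal `I_g + (λ_g)`. -/
def Rideal (g : ℕ) : Ideal (MvPolynomial (Fin g) ℚ) :=
  mumfordIdeal g ⊔ Ideal.span {lam g g}

/-- `ℛ_g = ℚ[λ_1,…,λ_g]/(I_g + (λ_g))`, van der Geer's presentation of the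
tautological ring `R*(𝒜_g)`. -/
abbrev Rring (g : ℕ) := MvPolynomial (Fin g) ℚ ⧸ Rideal g

/-- The degree-`k` graded piece of `ℛ_g`, for the grading with `deg λ_i = i`:
the image of the weighted-homogeneous polynomials of weighted degree `k`. -/
def homogR (g k : ℕ) : Submodule ℚ (Rring g) :=
  Submodule.map (Ideal.Quotient.mkₐ ℚ (Rideal g)).toLinearMap
    (weightedHomogeneousSubmodule ℚ (fun i : Fin g => (i : ℕ) + 1) k)

/-- The degree-`k` graded piece of `𝒬_h`, for the grading with `deg λ_i = i`. -/
def homogQ (h k : ℕ) : Submodule ℚ (Qring h) :=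
  Submodule.map (Ideal.Quotient.mkₐ ℚ (mumfordIdeal h)).toLinearMap
    (weightedHomogeneousSubmodule ℚ (fun i : Fin h => (i : ℕ) + 1) k)


namespace VdG

variable (g : ℕ)

lemma lam_zero : lam g 0 = 1 := by simp [lam]

lemma lam_eq_X {m : ℕ} (h1 : m ≠ 0) (h2 : m ≤ g) :
    lam g m = X ⟨m - 1, by omega⟩ := by
  rw [lam, dif_neg h1, dif_pos h2]

lemma lam_eq_zero {m : ℕ} (h1 : m ≠ 0) (h2 : g < m) : lam g m = 0 := by
  rw [lam, dif_neg h1, dif_neg (by omega)]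

def wtN (m : ℕ) : ℕ := m * (2 * g - m)

def wt (i : Fin g) : ℕ := wtN g (i.1 + 1)

def W (d : Fin g →₀ ℕ) : ℕ := d.sum fun i e => e * wt g i

lemma W_add (a b : Fin g →₀ ℕ) : W g (a + b) = W g a + W g b :=
  Finsupp.sum_add_index' (fun _ => zero_mul _) (fun _ m n => add_mul m n _)

lemma W_single (j : Fin g) (n : ℕ) : W g (Finsupp.single j n) = n * wt g j :=
  Finsupp.sum_single_index (zero_mul _)

lemma wtN_lt {i j : ℕ} (h1 : 1 ≤ j) (hj : j ≤ g) (hi : i < j) (hb : 2*j - i ≤ g) :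
    wtN g i + wtN g (2*j - i) < 2 * wtN g j := by
  unfold wtN
  have h2 : i ≤ 2 * g := by omega
  have h3 : 2 * j - i ≤ 2 * g := by omega
  have h4 : j ≤ 2 * g := by omega
  zify [h2, h3, h4]
  rw [Nat.cast_sub (by omega : i ≤ 2*j)]
  push_cast
  nlinarith [sq_nonneg ((j:ℤ) - i - 1), sq_nonneg ((j:ℤ) - i)]

def sPoly (j : ℕ) : MvPolynomial (Fin g) ℚ :=
  ∑ i ∈ Finset.range j, ((-2 : ℚ) * (-1)^(i+j)) • (lam g i * lam g (2*j - i))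

lemma eq_of_mem_support_monomial {s d : Fin g →₀ ℕ} {c : ℚ}
    (h : d ∈ ((monomial s c) : MvPolynomial (Fin g) ℚ).support) : d = s := by
  rw [MvPolynomial.support_monomial] at h
  by_cases hc : c = 0
  · simp [hc] at h
  · simpa [hc] using h

lemma sPoly_support {j : ℕ} (h1 : 1 ≤ j) (hj : j ≤ g) {d' : Fin g →₀ ℕ}
    (hd : d' ∈ (sPoly g j).support) : W g d' < 2 * wtN g j := by
  classical
  rw [sPoly] at hd
  have hd2 := MvPolynomial.support_sum hd
  rw [Finset.mem_biUnion] at hd2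
  obtain ⟨i, hi, hdi⟩ := hd2
  rw [Finset.mem_range] at hi
  have hdi2 := Finsupp.support_smul hdi
  by_cases hb : 2*j - i ≤ g
  · have hbne : 2*j - i ≠ 0 := by omega
    rw [lam_eq_X g hbne hb] at hdi2
    by_cases hi0 : i = 0
    · subst hi0
      rw [lam_zero, one_mul, MvPolynomial.X] at hdi2
      have hds := eq_of_mem_support_monomial g hdi2
      subst hds
      rw [W_single, one_mul]
      have e2 : wt g ⟨2*j-0-1, by omega⟩ = wtN g (2*j-0) := by
        show wtN g ((2*j-0-1)+1) = wtN g (2*j-0); congr 1; omega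
      rw [e2]
      have h0 := wtN_lt g h1 hj (i := 0) (by omega) (by omega)
      have hz : wtN g 0 = 0 := by simp [wtN]
      omega
    · rw [lam_eq_X g hi0 (by omega), MvPolynomial.X, MvPolynomial.X,
        monomial_mul] at hdi2
      have hds := eq_of_mem_support_monomial g hdi2
      subst hds
      rw [W_add, W_single, W_single]
      have e1 : wt g ⟨i-1, by omega⟩ = wtN g i := by
        show wtN g ((i-1)+1) = wtN g i; congr 1; omega
      have e2 : wt g ⟨2*j-i-1, by omega⟩ = wtN g (2*j-i) := by
        show wtN g ((2*j-i-1)+1) = wtN g (2*j-i); congr 1; omega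
      rw [one_mul, one_mul, e1, e2]
      exact wtN_lt g h1 hj hi hb
  · rw [lam_eq_zero g (m := 2*j - i) (by omega) (by omega), mul_zero] at hdi2
    simp at hdi2

lemma step_weight {d : Fin g →₀ ℕ} {j : Fin g} (hdj : 2 ≤ d j) {d' : Fin g →₀ ℕ}
    (hd' : d' ∈ ((monomial (d - Finsupp.single j 2) (1:ℚ)) * sPoly g (j.1+1)).support) :
    W g d' < W g d := by
  classical
  rw [MvPolynomial.mem_support_iff, MvPolynomial.coeff_monomial_mul'] at hd'
  by_cases hle : d - Finsupp.single j 2 ≤ d'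
  · rw [if_pos hle, one_mul] at hd'
    have hmem : d' - (d - Finsupp.single j 2) ∈ (sPoly g (j.1+1)).support :=
      MvPolynomial.mem_support_iff.mpr hd'
    have hlt := sPoly_support g (by omega) (by omega : j.1+1 ≤ g) hmem
    have hsd : Finsupp.single j 2 ≤ d := by
      rw [Finsupp.single_le_iff]; exact hdj
    have hd'eq : d' = (d - Finsupp.single j 2) + (d' - (d - Finsupp.single j 2)) :=
      (add_tsub_cancel_of_le hle).symm
    have hdeq : d = (d - Finsupp.single j 2) + Finsupp.single j 2 :=
      (tsub_add_cancel_of_le hsd).symm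
    have hwj : W g (Finsupp.single j 2) = 2 * wtN g (j.1+1) := by
      rw [W_single]; rfl
    calc W g d' = W g (d - Finsupp.single j 2) + W g (d' - (d - Finsupp.single j 2)) := by
          rw [← W_add, ← hd'eq]
      _ < W g (d - Finsupp.single j 2) + 2 * wtN g (j.1+1) := by omega
      _ = W g d := by rw [← hwj, ← W_add, ← hdeq]
  · rw [if_neg hle] at hd'
    exact absurd rfl hd'

lemma neg_one_pow_sub_even {i k : ℕ} (h : i ≤ k) (hk : Even k) :
    ((-1 : MvPolynomial (Fin g) ℚ)) ^ (k - i) = (-1) ^ i := by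
  rcases Nat.even_or_odd i with he | ho
  · have hki : Even (k - i) := by
      rcases he with ⟨m, rfl⟩; rcases hk with ⟨n, rfl⟩; exact ⟨n - m, by omega⟩
    rw [hki.neg_one_pow, he.neg_one_pow]
  · have hki : Odd (k - i) := by
      rcases ho with ⟨m, rfl⟩; rcases hk with ⟨n, rfl⟩; exact ⟨n - m - 1, by omega⟩
    rw [hki.neg_one_pow, ho.neg_one_pow]

lemma neg_one_pow_sub_odd {i k : ℕ} (h : i ≤ k) (hk : Odd k) :
    ((-1 : MvPolynomial (Fin g) ℚ)) ^ (k - i) = -((-1) ^ i) := by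
  rcases Nat.even_or_odd i with he | ho
  · have hki : Odd (k - i) := by
      rcases he with ⟨m, rfl⟩; rcases hk with ⟨n, rfl⟩; exact ⟨n - m, by omega⟩
    rw [hki.neg_one_pow, he.neg_one_pow]
  · have hki : Even (k - i) := by
      rcases ho with ⟨m, rfl⟩; rcases hk with ⟨n, rfl⟩; exact ⟨n - m, by omega⟩
    rw [hki.neg_one_pow, ho.neg_one_pow, neg_neg]

lemma neg_one_pow_self (k : ℕ) :
    ((-1 : MvPolynomial (Fin g) ℚ)) ^ k * (-1) ^ k = 1 := by
  rw [← pow_add]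
  exact Even.neg_one_pow ⟨k, rfl⟩

lemma mumford_odd {d : ℕ} (hd : Odd d) : mumford g d = 0 := by
  rw [mumford]
  apply Finset.sum_involution (fun i _ => d - i)
  · intro i hi
    rw [Finset.mem_range] at hi
    have hid : i ≤ d := by omega
    have e1 : d - (d - i) = i := by omega
    rw [e1, neg_one_pow_sub_odd g hid hd]
    ring
  · intro i hi _
    rw [Finset.mem_range] at hi
    rcases hd with ⟨m, hm⟩
    omega
  · intro i hi
    rw [Finset.mem_range] at hi ⊢
    omega
  · intro i hi
    rw [Finset.mem_range] at hi
    omega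

lemma lam_sq_sub_sPoly {j : ℕ} (h1 : 1 ≤ j) (hj : j ≤ g) :
    lam g j ^ 2 - sPoly g j = (-1 : MvPolynomial (Fin g) ℚ) ^ j * mumford g (2*j) := by
  set P := MvPolynomial (Fin g) ℚ
  set f : ℕ → P := fun i => (-1 : P)^(2*j-i) * lam g i * lam g (2*j-i) with hf
  have step1 : mumford g (2*j) = (∑ i ∈ Finset.range j, (f i + f (2*j - i))) + f j := by
    rw [mumford]
    have hsp : ∑ i ∈ Finset.range (2*j+1), f i
        = (∑ i ∈ Finset.range (j+1), f i) + ∑ i ∈ Finset.Ico (j+1) (2*j+1), f i := by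
      rw [Finset.range_eq_Ico, Finset.range_eq_Ico]
      exact (Finset.sum_Ico_consecutive f (m := 0) (n := j+1) (k := 2*j+1) (by omega) (by omega)).symm
    have hrefl : ∑ i ∈ Finset.Ico (j+1) (2*j+1), f i
        = ∑ i ∈ Finset.range j, f (2*j - i) := by
      apply Finset.sum_nbij' (i := fun a => 2*j - a) (j := fun b => 2*j - b)
      · intro a ha; rw [Finset.mem_Ico] at ha; rw [Finset.mem_range]; omega
      · intro a ha; rw [Finset.mem_range] at ha; rw [Finset.mem_Ico]; omega
      · intro a ha; rw [Finset.mem_Ico] at ha; omega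
      · intro a ha; rw [Finset.mem_range] at ha; omega
      · intro a ha; rw [Finset.mem_Ico] at ha; congr 1; omega
    rw [hsp, Finset.sum_range_succ, hrefl, Finset.sum_add_distrib]
    ring
  rw [step1, mul_add, Finset.mul_sum]
  have hterm : ∀ i ∈ Finset.range j,
      (-1:P)^j * (f i + f (2*j - i))
        = -(((-2 : ℚ) * (-1)^(i+j)) • (lam g i * lam g (2*j - i))) := by
    intro i hi
    rw [Finset.mem_range] at hi
    have e1 : 2*j - (2*j - i) = i := by omega
    rw [hf]
    simp only [e1]
    rw [neg_one_pow_sub_even g (by omega) ⟨j, by omega⟩, MvPolynomial.smul_eq_C_mul]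
    simp only [map_mul, map_pow, map_neg, map_one, map_ofNat]
    rw [pow_add]
    ring
  have hlast : (-1:P)^j * f j = lam g j ^ 2 := by
    rw [hf]
    simp only [show 2*j - j = j by omega]
    rw [← mul_assoc, ← mul_assoc, neg_one_pow_self, one_mul, sq]
  rw [Finset.sum_congr rfl hterm, hlast, Finset.sum_neg_distrib, ← sPoly]
  ring

lemma sPoly_top : sPoly g g = 0 := by
  rw [sPoly]
  apply Finset.sum_eq_zero
  intro i hi
  rw [Finset.mem_range] at hi
  rw [lam_eq_zero g (m := 2*g - i) (by omega) (by omega), mul_zero, smul_zero]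

variable (hg : 0 < g)

def lastI : Fin g := ⟨g - 1, by omega⟩

def F (d : Fin g →₀ ℕ) : MvPolynomial (Fin g) ℚ :=
  if 1 ≤ d (lastI g hg) then 0
  else if hs : (Finset.univ.filter fun i : Fin g => 2 ≤ d i).Nonempty then
    let j := (Finset.univ.filter fun i : Fin g => 2 ≤ d i).min' hs
    let p := (monomial (d - Finsupp.single j 2) (1:ℚ)) * sPoly g (j.1+1)
    ∑ d' ∈ p.support.attach, p.coeff d'.1 • F d'.1
  else monomial d 1
termination_by W g d
decreasing_by
  exact step_weight g (by
    have := (Finset.univ.filter fun i : Fin g => 2 ≤ d i).min'_mem hs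
    simpa using this) d'.2

def N : MvPolynomial (Fin g) ℚ →ₗ[ℚ] MvPolynomial (Fin g) ℚ :=
  (MvPolynomial.basisMonomials (Fin g) ℚ).constr ℚ (F g hg)

lemma N_monomial (d : Fin g →₀ ℕ) (c : ℚ) :
    N g hg (monomial d c) = c • F g hg d := by
  have h1 : (monomial d c : MvPolynomial (Fin g) ℚ)
      = c • (MvPolynomial.basisMonomials (Fin g) ℚ) d := by
    rw [MvPolynomial.coe_basisMonomials]
    simp [MvPolynomial.smul_monomial]
  rw [h1, map_smul, N, Module.Basis.constr_basis]

lemma N_apply (p : MvPolynomial (Fin g) ℚ) :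
    N g hg p = ∑ d ∈ p.support, p.coeff d • F g hg d := by
  conv_lhs => rw [p.as_sum]
  rw [map_sum]
  exact Finset.sum_congr rfl fun d _ => N_monomial g hg d _

lemma F_last {d : Fin g →₀ ℕ} (h : 1 ≤ d (lastI g hg)) : F g hg d = 0 := by
  rw [F, if_pos h]

lemma F_base {d : Fin g →₀ ℕ} (h : ¬ 1 ≤ d (lastI g hg))
    (h2 : ∀ i, d i ≤ 1) : F g hg d = monomial d 1 := by
  have he : (Finset.univ.filter fun i : Fin g => 2 ≤ d i) = ∅ :=
    Finset.filter_eq_empty_iff.mpr (fun {i} _ => by have := h2 i; omega)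
  rw [F, if_neg h, dif_neg (by rw [he]; exact Finset.not_nonempty_empty)]

lemma F_sq {d : Fin g →₀ ℕ} (h : ¬ 1 ≤ d (lastI g hg))
    (hs : (Finset.univ.filter fun i : Fin g => 2 ≤ d i).Nonempty) :
    F g hg d = N g hg ((monomial (d - Finsupp.single
        ((Finset.univ.filter fun i : Fin g => 2 ≤ d i).min' hs) 2) (1:ℚ)) *
      sPoly g (((Finset.univ.filter fun i : Fin g => 2 ≤ d i).min' hs).1+1)) := by
  rw [F, if_neg h, dif_pos hs, N_apply]
  exact Finset.sum_attach _ (fun y => coeff y _ • F g hg y)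

lemma W_single_two (j : Fin g) : W g (Finsupp.single j 2) = 2 * wtN g (j.1+1) := by
  rw [W_single]; rfl

lemma N_monomial_mul (a : Fin g →₀ ℕ) (q : MvPolynomial (Fin g) ℚ) :
    N g hg (monomial a 1 * q) = ∑ ν ∈ q.support, q.coeff ν • F g hg (a + ν) := by
  conv_lhs => rw [q.as_sum]
  rw [Finset.mul_sum, map_sum]
  apply Finset.sum_congr rfl
  intro ν _
  rw [monomial_mul, one_mul, N_monomial]

lemma N_monomial_mul_last (a : Fin g →₀ ℕ) (q : MvPolynomial (Fin g) ℚ)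
    (ha : 1 ≤ a (lastI g hg)) : N g hg (monomial a 1 * q) = 0 := by
  rw [N_monomial_mul]
  apply Finset.sum_eq_zero
  intro ν _
  rw [F_last g hg (show 1 ≤ (a+ν) (lastI g hg) by rw [Finsupp.add_apply]; omega), smul_zero]

lemma lastI_succ : (lastI g hg).1 + 1 = g := by
  simp only [lastI]; omega

lemma F_add_sq (n : ℕ) : ∀ (a : Fin g →₀ ℕ) (j : Fin g),
    W g (a + Finsupp.single j 2) < n →
    F g hg (a + Finsupp.single j 2) = N g hg (monomial a 1 * sPoly g (j.1+1)) := by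
  induction n with
  | zero => intro a j h; omega
  | succ n IH =>
    intro a j hW
    set d := a + Finsupp.single j 2 with hd
    have hdj : 2 ≤ d j := by
      rw [hd, Finsupp.add_apply, Finsupp.single_eq_same]; omega
    by_cases hlast : 1 ≤ d (lastI g hg)
    · rw [F_last g hg hlast]
      by_cases hjl : j = lastI g hg
      · rw [hjl, lastI_succ, sPoly_top, mul_zero, map_zero]
      · have hsl : (Finsupp.single j 2) (lastI g hg) = 0 :=
          Finsupp.single_eq_of_ne' hjl
        have hal : 1 ≤ a (lastI g hg) := by
          rw [hd, Finsupp.add_apply, hsl] at hlast; omega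
        rw [N_monomial_mul_last g hg _ _ hal]
    · have hs : (Finset.univ.filter fun i : Fin g => 2 ≤ d i).Nonempty :=
        ⟨j, Finset.mem_filter.mpr ⟨Finset.mem_univ _, hdj⟩⟩
      set i0 := (Finset.univ.filter fun i : Fin g => 2 ≤ d i).min' hs with hi0
      have hdi0 : 2 ≤ d i0 := by
        have := Finset.min'_mem _ hs
        rw [Finset.mem_filter] at this
        exact this.2
      by_cases hij : i0 = j
      · rw [F_sq g hg hlast hs, ← hi0, hij, hd, add_tsub_cancel_right]
      · have hsi0 : (Finsupp.single j 2) i0 = 0 := Finsupp.single_eq_of_ne' (fun h => hij h.symm)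
        have hai0 : 2 ≤ a i0 := by
          rw [hd, Finsupp.add_apply, hsi0] at hdi0; omega
        set b := a - Finsupp.single i0 2 with hb
        have hab : a = b + Finsupp.single i0 2 :=
          (tsub_add_cancel_of_le (Finsupp.single_le_iff.mpr hai0)).symm
        have hsub : d - Finsupp.single i0 2 = b + Finsupp.single j 2 := by
          rw [hd, hab, add_right_comm, add_tsub_cancel_right]
        have hWd : W g d = W g b + 2 * wtN g (i0.1+1) + 2 * wtN g (j.1+1) := by
          rw [hd, hab, W_add, W_add, W_single_two, W_single_two]
        rw [F_sq g hg hlast hs, ← hi0, hsub, N_monomial_mul, N_monomial_mul]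
        have hL : ∀ ν ∈ (sPoly g (i0.1+1)).support,
            (sPoly g (i0.1+1)).coeff ν • F g hg (b + Finsupp.single j 2 + ν)
            = (sPoly g (i0.1+1)).coeff ν • ∑ μ ∈ (sPoly g (j.1+1)).support,
                (sPoly g (j.1+1)).coeff μ • F g hg (b + ν + μ) := by
          intro ν hν
          have hWν := sPoly_support g (by omega) (by omega : i0.1+1 ≤ g) hν
          have hWbν : W g ((b + ν) + Finsupp.single j 2) < n := by
            have : W g ((b + ν) + Finsupp.single j 2)
                = W g b + W g ν + 2 * wtN g (j.1+1) := by
              rw [W_add, W_add, W_single_two]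
            omega
          congr 1
          rw [add_right_comm, IH (b + ν) j hWbν, N_monomial_mul]
        have hR : ∀ μ ∈ (sPoly g (j.1+1)).support,
            (sPoly g (j.1+1)).coeff μ • F g hg (a + μ)
            = (sPoly g (j.1+1)).coeff μ • ∑ ν ∈ (sPoly g (i0.1+1)).support,
                (sPoly g (i0.1+1)).coeff ν • F g hg (b + μ + ν) := by
          intro μ hμ
          have hWμ := sPoly_support g (by omega) (by omega : j.1+1 ≤ g) hμ
          have hWbμ : W g ((b + μ) + Finsupp.single i0 2) < n := by
            have : W g ((b + μ) + Finsupp.single i0 2)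
                = W g b + W g μ + 2 * wtN g (i0.1+1) := by
              rw [W_add, W_add, W_single_two]
            omega
          congr 1
          rw [hab, add_right_comm, IH (b + μ) i0 hWbμ, N_monomial_mul]
        rw [Finset.sum_congr rfl hL, Finset.sum_congr rfl hR]
        simp_rw [Finset.smul_sum, smul_smul]
        rw [Finset.sum_comm]
        apply Finset.sum_congr rfl
        intro μ _
        apply Finset.sum_congr rfl
        intro ν _
        rw [mul_comm, add_right_comm]

lemma N_monomial_mul_rel (a : Fin g →₀ ℕ) (c : ℚ) (j : Fin g) :
    N g hg (monomial a c * (X j ^ 2 - sPoly g (j.1+1))) = 0 := by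
  have e : (monomial a c : MvPolynomial (Fin g) ℚ) = c • monomial a 1 := by
    rw [MvPolynomial.smul_monomial, smul_eq_mul, mul_one]
  rw [e, smul_mul_assoc, map_smul, mul_sub, map_sub]
  have e2 : monomial a (1:ℚ) * X j ^ 2 = monomial (a + Finsupp.single j 2) 1 := by
    rw [X_pow_eq_monomial, monomial_mul, mul_one]
  rw [e2]
  have e3 : N g hg (monomial (a + Finsupp.single j 2) 1)
      = F g hg (a + Finsupp.single j 2) := by
    rw [N_monomial, one_smul]
  rw [e3, F_add_sq g hg (W g (a + Finsupp.single j 2) + 1) a j (by omega), sub_self,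
    smul_zero]

lemma N_mul_rel (q : MvPolynomial (Fin g) ℚ) (j : Fin g) :
    N g hg (q * (X j ^ 2 - sPoly g (j.1+1))) = 0 := by
  conv_lhs => rw [q.as_sum, Finset.sum_mul, map_sum]
  apply Finset.sum_eq_zero
  intro a _
  exact N_monomial_mul_rel g hg a _ j

lemma N_mul_lam_g (q : MvPolynomial (Fin g) ℚ) :
    N g hg (q * lam g g) = 0 := by
  have e : lam g g = X (lastI g hg) := lam_eq_X g (by omega) le_rfl
  rw [e]
  conv_lhs => rw [q.as_sum, Finset.sum_mul, map_sum]
  apply Finset.sum_eq_zero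
  intro a _
  have e2 : (monomial a (q.coeff a) : MvPolynomial (Fin g) ℚ) * X (lastI g hg)
      = monomial (a + Finsupp.single (lastI g hg) 1) (q.coeff a) := by
    rw [X, monomial_mul, mul_one]
  rw [e2, N_monomial, F_last g hg (by rw [Finsupp.add_apply, Finsupp.single_eq_same]; omega),
    smul_zero]

lemma N_kills {p : MvPolynomial (Fin g) ℚ} (hp : p ∈ Rideal g) : N g hg p = 0 := by
  have hR : p ∈ Ideal.span ((mumford g '' Set.Icc 1 (2*g)) ∪ {lam g g}) := by
    rwa [Ideal.span_union, ← mumfordIdeal, ← Rideal]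
  clear hp
  have key : ∀ q : MvPolynomial (Fin g) ℚ, N g hg (q * p) = 0 := by
    induction hR using Submodule.span_induction with
    | mem x hx =>
      intro q
      rcases hx with hx | hx
      · obtain ⟨dd, hdd, rfl⟩ := hx
        rw [Set.mem_Icc] at hdd
        rcases Nat.even_or_odd dd with he | ho
        · obtain ⟨jj, rfl⟩ := he
          have hjj1 : 1 ≤ jj := by omega
          have hjjg : jj ≤ g := by omega
          have hmum : mumford g (jj + jj)
              = (-1 : MvPolynomial (Fin g) ℚ)^jj * (lam g jj ^ 2 - sPoly g jj) := by
            rw [lam_sq_sub_sPoly g hjj1 hjjg, ← mul_assoc, neg_one_pow_self, one_mul,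
              show 2*jj = jj + jj by omega]
          have hlj : lam g jj = X (⟨jj - 1, by omega⟩ : Fin g) := lam_eq_X g (by omega) hjjg
          have hfin : (⟨jj - 1, by omega⟩ : Fin g).1 + 1 = jj := by simp; omega
          rw [hmum, show q * ((-1 : MvPolynomial (Fin g) ℚ)^jj * (lam g jj ^ 2 - sPoly g jj))
              = (q * (-1)^jj) * (lam g jj ^ 2 - sPoly g jj) by ring, hlj]
          have := N_mul_rel g hg (q * (-1)^jj) ⟨jj - 1, by omega⟩
          simpa only [hfin] using this
        · rw [mumford_odd g ho, mul_zero, map_zero]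
      · rw [Set.mem_singleton_iff] at hx
        subst hx
        exact N_mul_lam_g g hg q
    | zero => intro q; rw [mul_zero, map_zero]
    | add x y hx hy ihx ihy =>
      intro q
      rw [mul_add, map_add, ihx q, ihy q, add_zero]
    | smul r x hx ih =>
      intro q
      rw [smul_eq_mul, show q * (r * x) = (q * r) * x by ring, ih (q * r)]
  have := key 1
  rwa [one_mul] at this

lemma F_congr (n : ℕ) : ∀ d : Fin g →₀ ℕ, W g d < n →
    monomial d (1:ℚ) - F g hg d ∈ Rideal g := by
  induction n with
  | zero => intro d h; omega
  | succ n IH =>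
    intro d hW
    by_cases hlast : 1 ≤ d (lastI g hg)
    · rw [F_last g hg hlast, sub_zero]
      have hdd : d = (d - Finsupp.single (lastI g hg) 1) + Finsupp.single (lastI g hg) 1 :=
        (tsub_add_cancel_of_le (Finsupp.single_le_iff.mpr hlast)).symm
      have e : (monomial d (1:ℚ) : MvPolynomial (Fin g) ℚ)
          = monomial (d - Finsupp.single (lastI g hg) 1) 1 * X (lastI g hg) := by
        rw [X, monomial_mul, mul_one, ← hdd]
      rw [e]
      apply Ideal.mul_mem_left
      have e2 : (X (lastI g hg) : MvPolynomial (Fin g) ℚ) = lam g g :=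
        (lam_eq_X g (by omega) le_rfl).symm
      rw [e2, Rideal]
      exact Ideal.mem_sup_right (Ideal.subset_span rfl)
    · by_cases hs : (Finset.univ.filter fun i : Fin g => 2 ≤ d i).Nonempty
      · set j := (Finset.univ.filter fun i : Fin g => 2 ≤ d i).min' hs with hj
        have hdj : 2 ≤ d j := by
          have := Finset.min'_mem _ hs
          rw [Finset.mem_filter] at this
          exact this.2
        set p := monomial (d - Finsupp.single j 2) (1:ℚ) * sPoly g (j.1+1) with hp
        have hdd : d = (d - Finsupp.single j 2) + Finsupp.single j 2 :=
          (tsub_add_cancel_of_le (Finsupp.single_le_iff.mpr hdj)).symm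
        have h1 : (monomial d (1:ℚ) : MvPolynomial (Fin g) ℚ)
            = monomial (d - Finsupp.single j 2) 1 * X j ^ 2 := by
          rw [X_pow_eq_monomial, monomial_mul, mul_one, ← hdd]
        rw [F_sq g hg hlast hs, ← hj, ← hp]
        have split : monomial d (1:ℚ) - N g hg p
            = monomial (d - Finsupp.single j 2) 1 * (X j ^ 2 - sPoly g (j.1+1))
              + (p - N g hg p) := by
          rw [mul_sub, ← h1, hp]; ring
        rw [split]
        apply add_mem
        · apply Ideal.mul_mem_left
          have hXj : (X j : MvPolynomial (Fin g) ℚ) = lam g (j.1+1) := by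
            rw [lam_eq_X g (by omega) (by omega)]
            congr 1
            all_goals exact Fin.ext (by simp)
          rw [hXj, lam_sq_sub_sPoly g (by omega) (by omega)]
          apply Ideal.mul_mem_left
          rw [Rideal]
          apply Ideal.mem_sup_left
          exact Ideal.subset_span ⟨2*(j.1+1), Set.mem_Icc.mpr ⟨by omega, by omega⟩, rfl⟩
        · have hsplit2 : p - N g hg p
              = ∑ d' ∈ p.support, p.coeff d' • (monomial d' 1 - F g hg d') := by
            simp_rw [smul_sub]
            rw [Finset.sum_sub_distrib, ← N_apply]
            congr 1
            conv_lhs => rw [p.as_sum]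
            apply Finset.sum_congr rfl
            intro d' _
            rw [MvPolynomial.smul_monomial, smul_eq_mul, mul_one]
          rw [hsplit2]
          apply Submodule.sum_mem
          intro d' hd'
          have hWd' : W g d' < W g d := step_weight g hdj hd'
          rw [MvPolynomial.smul_eq_C_mul]
          exact Ideal.mul_mem_left _ _ (IH d' (by omega))
      · have hall : ∀ i, d i ≤ 1 := by
          intro i
          by_contra hi
          exact hs ⟨i, Finset.mem_filter.mpr ⟨Finset.mem_univ _, by omega⟩⟩
        rw [F_base g hg hlast hall, sub_self]
        exact Submodule.zero_mem _

lemma sub_N_mem (p : MvPolynomial (Fin g) ℚ) : p - N g hg p ∈ Rideal g := by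
  have hsplit : p - N g hg p
      = ∑ d ∈ p.support, p.coeff d • (monomial d 1 - F g hg d) := by
    simp_rw [smul_sub]
    rw [Finset.sum_sub_distrib, ← N_apply]
    congr 1
    conv_lhs => rw [p.as_sum]
    apply Finset.sum_congr rfl
    intro d _
    rw [MvPolynomial.smul_monomial, smul_eq_mul, mul_one]
  rw [hsplit]
  apply Submodule.sum_mem
  intro d _
  rw [MvPolynomial.smul_eq_C_mul]
  exact Ideal.mul_mem_left _ _ (F_congr g hg (W g d + 1) d (by omega))

def castE (j : Fin (g-1)) : Fin g := ⟨j.1, Nat.lt_of_lt_of_le j.2 (Nat.sub_le g 1)⟩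

def toD (J : Finset (Fin (g-1))) : Fin g →₀ ℕ := ∑ j ∈ J, Finsupp.single (castE g j) 1

lemma toD_apply (J : Finset (Fin (g-1))) (x : Fin g) :
    toD g J x = if h : x.1 < g - 1 then (if ⟨x.1, h⟩ ∈ J then 1 else 0) else 0 := by
  classical
  rw [toD, Finsupp.finset_sum_apply]
  by_cases hx : x.1 < g - 1
  · rw [dif_pos hx]
    have he : ∀ j ∈ J, Finsupp.single (castE g j) 1 x
        = if j = ⟨x.1, hx⟩ then 1 else 0 := by
      intro j _
      rw [Finsupp.single_apply]
      by_cases hj : j = ⟨x.1, hx⟩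
      · subst hj
        rw [if_pos rfl, if_pos (show castE g ⟨x.1, hx⟩ = x from Fin.ext rfl)]
      · rw [if_neg hj,
          if_neg (show ¬(castE g j = x) from
            fun hc => hj (Fin.ext (show j.1 = x.1 from congrArg Fin.val hc)))]
    rw [Finset.sum_congr rfl he, Finset.sum_ite_eq' J ⟨x.1, hx⟩ (fun _ => 1)]
  · rw [dif_neg hx]
    apply Finset.sum_eq_zero
    intro j _
    rw [Finsupp.single_apply, if_neg]
    intro hc
    have h2 := congrArg Fin.val hc
    simp only [castE] at h2
    have := j.2
    omega

lemma toD_le_one (J : Finset (Fin (g-1))) (x : Fin g) : toD g J x ≤ 1 := by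
  rw [toD_apply]
  split
  · split <;> omega
  · omega

lemma toD_last (J : Finset (Fin (g-1))) : toD g J (lastI g hg) = 0 := by
  rw [toD_apply, dif_neg]
  simp only [lastI]
  omega

lemma toD_inj : Function.Injective (toD g) := by
  intro J K h
  ext j
  have h2 := congrArg (fun e : Fin g →₀ ℕ => e (castE g j)) h
  simp only [toD_apply] at h2
  have hj : (castE g j).1 < g - 1 := j.2
  rw [dif_pos hj, dif_pos hj] at h2
  have hjj : (⟨(castE g j).1, hj⟩ : Fin (g-1)) = j := Fin.ext rfl
  rw [hjj] at h2
  constructor <;> intro hm <;> by_contra hc <;> simp [hm, hc] at h2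

lemma toD_surj {e : Fin g →₀ ℕ} (h1 : ∀ i, e i ≤ 1)
    (h0 : e (lastI g hg) = 0) : ∃ J, toD g J = e := by
  classical
  refine ⟨Finset.univ.filter fun j : Fin (g-1) => e (castE g j) = 1, ?_⟩
  ext x
  rw [toD_apply]
  by_cases hx : x.1 < g - 1
  · rw [dif_pos hx]
    have hc : castE g (⟨x.1, hx⟩ : Fin (g-1)) = x := Fin.ext rfl
    simp only [Finset.mem_filter, Finset.mem_univ, true_and, hc]
    have := h1 x
    split <;> omega
  · rw [dif_neg hx]
    have hx2 : x = lastI g hg := Fin.ext (by simp only [lastI]; omega)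
    rw [hx2, h0]

lemma prod_lam (J : Finset (Fin (g-1))) :
    ∏ j ∈ J, lam g (j.1+1) = monomial (toD g J) 1 := by
  classical
  induction J using Finset.induction_on with
  | empty => simp [toD, MvPolynomial.monomial_zero', MvPolynomial.C_1]
  | @insert a J ha IH =>
    rw [Finset.prod_insert ha, IH,
      show toD g (insert a J) = Finsupp.single (castE g a) 1 + toD g J from by
        rw [toD, toD, Finset.sum_insert ha]]
    have hl : lam g (a.1+1) = X (castE g a) := by
      rw [lam_eq_X g (Nat.succ_ne_zero _) (by have := a.2; omega)]
      congr 1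
      all_goals exact Fin.ext (by simp [castE])
    rw [hl, X, monomial_mul, one_mul]

lemma F_span (n : ℕ) : ∀ d : Fin g →₀ ℕ, W g d < n →
    F g hg d ∈ Submodule.span ℚ (Set.range fun J : Finset (Fin (g-1)) =>
      (monomial (toD g J) (1:ℚ) : MvPolynomial (Fin g) ℚ)) := by
  induction n with
  | zero => intro d h; omega
  | succ n IH =>
    intro d hW
    by_cases hlast : 1 ≤ d (lastI g hg)
    · rw [F_last g hg hlast]
      exact Submodule.zero_mem _
    · by_cases hs : (Finset.univ.filter fun i : Fin g => 2 ≤ d i).Nonempty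
      · have hdj : 2 ≤ d ((Finset.univ.filter fun i : Fin g => 2 ≤ d i).min' hs) := by
          have := Finset.min'_mem _ hs
          rw [Finset.mem_filter] at this
          exact this.2
        rw [F_sq g hg hlast hs, N_apply]
        apply Submodule.sum_mem
        intro d' hd'
        have hWd' := step_weight g hdj hd'
        exact Submodule.smul_mem _ _ (IH d' (by omega))
      · have hall : ∀ i, d i ≤ 1 := by
          intro i
          by_contra hi
          exact hs ⟨i, Finset.mem_filter.mpr ⟨Finset.mem_univ _, by omega⟩⟩
        rw [F_base g hg hlast hall]
        obtain ⟨J, hJ⟩ := toD_surj g hg hall (by omega)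
        exact Submodule.subset_span ⟨J, by simp only []; rw [hJ]⟩

end VdG

/-- **Monomial basis of ℛ_g (van der Geer).**
For `g ≥ 1`, the `2^{g−1}` classes `λ_J = ∏_{j∈J} λ_j`, for `J ⊆ {1,…,g−1}`, form
a `ℚ`-basis of `ℛ_g`; in particular `dim_ℚ ℛ_g = 2^{g−1}`. -/
theorem Rring_lambda_basis (g : ℕ) (hg : 1 ≤ g) :
    LinearIndependent ℚ (fun J : Finset (Fin (g - 1)) =>
        Ideal.Quotient.mk (Rideal g) (∏ j ∈ J, lam g ((j : ℕ) + 1))) ∧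
    Submodule.span ℚ (Set.range (fun J : Finset (Fin (g - 1)) =>
        Ideal.Quotient.mk (Rideal g) (∏ j ∈ J, lam g ((j : ℕ) + 1)))) = ⊤ ∧
    Module.finrank ℚ (Rring g) = 2 ^ (g - 1) := by
  classical
  have hg' : 0 < g := hg
  -- Linear independence
  have hind : LinearIndependent ℚ (fun J : Finset (Fin (g - 1)) =>
      Ideal.Quotient.mk (Rideal g) (∏ j ∈ J, lam g ((j : ℕ) + 1))) := by
    rw [Fintype.linearIndependent_iff]
    intro c hc
    have hq2 : (Ideal.Quotient.mkₐ ℚ (Rideal g))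
        (∑ J : Finset (Fin (g-1)), c J • (monomial (VdG.toD g J) 1 : MvPolynomial (Fin g) ℚ))
        = 0 := by
      rw [map_sum]
      have he : ∀ J : Finset (Fin (g-1)),
          (Ideal.Quotient.mkₐ ℚ (Rideal g))
            (c J • (monomial (VdG.toD g J) 1 : MvPolynomial (Fin g) ℚ))
          = c J • Ideal.Quotient.mk (Rideal g) (∏ j ∈ J, lam g ((j : ℕ) + 1)) := by
        intro J
        rw [map_smul, ← VdG.prod_lam, Ideal.Quotient.mkₐ_eq_mk]
      rw [Finset.sum_congr rfl (fun J _ => he J)]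
      exact hc
    rw [Ideal.Quotient.mkₐ_eq_mk] at hq2
    have hqmem := Ideal.Quotient.eq_zero_iff_mem.mp hq2
    have hNq := VdG.N_kills g hg' hqmem
    have hNq2 : VdG.N g hg'
        (∑ J : Finset (Fin (g-1)), c J • (monomial (VdG.toD g J) 1 : MvPolynomial (Fin g) ℚ))
        = ∑ J : Finset (Fin (g-1)), c J • (monomial (VdG.toD g J) 1 : MvPolynomial (Fin g) ℚ) := by
      rw [map_sum]
      apply Finset.sum_congr rfl
      intro J _
      rw [map_smul, VdG.N_monomial, one_smul,
        VdG.F_base g hg' (by rw [VdG.toD_last]; omega) (VdG.toD_le_one g J)]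
    have hq0 : (∑ J : Finset (Fin (g-1)), c J • (monomial (VdG.toD g J) 1
        : MvPolynomial (Fin g) ℚ)) = 0 := by
      rw [← hNq2, hNq]
    intro K
    have hcK := congrArg (MvPolynomial.coeff (VdG.toD g K)) hq0
    rw [MvPolynomial.coeff_sum] at hcK
    simp only [MvPolynomial.coeff_smul, MvPolynomial.coeff_monomial, MvPolynomial.coeff_zero,
      (VdG.toD_inj g).eq_iff, smul_eq_mul, mul_ite, mul_one, mul_zero,
      Finset.sum_ite_eq' Finset.univ K, Finset.mem_univ, if_pos] at hcK
    exact hcK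
  -- Spanning
  have hspan : Submodule.span ℚ (Set.range (fun J : Finset (Fin (g - 1)) =>
      Ideal.Quotient.mk (Rideal g) (∏ j ∈ J, lam g ((j : ℕ) + 1)))) = ⊤ := by
    rw [eq_top_iff]
    rintro x -
    obtain ⟨p, rfl⟩ := Ideal.Quotient.mk_surjective x
    have h1 : Ideal.Quotient.mk (Rideal g) p
        = Ideal.Quotient.mk (Rideal g) (VdG.N g hg' p) :=
      (Ideal.Quotient.mk_eq_mk_iff_sub_mem p _).mpr (VdG.sub_N_mem g hg' p)
    rw [h1]
    have h2 : VdG.N g hg' p ∈ Submodule.span ℚ (Set.range fun J : Finset (Fin (g-1)) =>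
        (monomial (VdG.toD g J) (1:ℚ) : MvPolynomial (Fin g) ℚ)) := by
      rw [VdG.N_apply]
      apply Submodule.sum_mem
      intro d _
      exact Submodule.smul_mem _ _ (VdG.F_span g hg' (VdG.W g d + 1) d (by omega))
    have h3 := Submodule.mem_map_of_mem
      (f := (Ideal.Quotient.mkₐ ℚ (Rideal g)).toLinearMap) h2
    rw [Submodule.map_span] at h3
    have h4 : (Ideal.Quotient.mkₐ ℚ (Rideal g)).toLinearMap (VdG.N g hg' p)
        = Ideal.Quotient.mk (Rideal g) (VdG.N g hg' p) := by
      simp [Ideal.Quotient.mkₐ_eq_mk]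
    rw [h4] at h3
    refine Submodule.span_mono ?_ h3
    rintro y ⟨z, ⟨J, rfl⟩, rfl⟩
    refine ⟨J, ?_⟩
    simp only [AlgHom.toLinearMap_apply, Ideal.Quotient.mkₐ_eq_mk]
    rw [VdG.prod_lam]
  refine ⟨hind, hspan, ?_⟩
  have hb : Module.Basis (Finset (Fin (g-1))) ℚ (Rring g) :=
    Module.Basis.mk hind (by rw [hspan])
  rw [Module.finrank_eq_card_basis hb, Fintype.card_finset, Fintype.card_fin]

end
end

section
/- Let g ≥ 1. Every homogeneous element of ℛ_g of degree strictly greater than g(g−1)/2 is zero; i.e., the graded piece of ℛ_g in degree k vanishes for all k > g(g−1)/2. -/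
open MvPolynomial

set_option maxHeartbeats 1000000

noncomputable section

/-! ### Auxiliary material for the proof -/

namespace VdGAux

/-- weighted degree of an exponent vector. -/
def W (g : ℕ) (d : Fin g →₀ ℕ) : ℕ := Finsupp.weight (fun j : Fin g => (j : ℕ) + 1) d

/-- sum of squares of the weights of an exponent vector. -/
def S (g : ℕ) (d : Fin g →₀ ℕ) : ℕ := Finsupp.weight (fun j : Fin g => ((j : ℕ) + 1) ^ 2) d

lemma W_add {g : ℕ} (a b : Fin g →₀ ℕ) : W g (a + b) = W g a + W g b := map_add _ a b

lemma S_add {g : ℕ} (a b : Fin g →₀ ℕ) : S g (a + b) = S g a + S g b := map_add _ a b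

lemma W_single {g : ℕ} (j : Fin g) (n : ℕ) :
    W g (Finsupp.single j n) = n * ((j : ℕ) + 1) := by
  simp [W, Finsupp.weight_apply, Finsupp.sum_single_index, smul_eq_mul]

lemma S_single {g : ℕ} (j : Fin g) (n : ℕ) :
    S g (Finsupp.single j n) = n * ((j : ℕ) + 1) ^ 2 := by
  simp [S, Finsupp.weight_apply, Finsupp.sum_single_index, smul_eq_mul]

lemma S_le {g : ℕ} (d : Fin g →₀ ℕ) : S g d ≤ g * W g d := by
  rw [W, S, Finsupp.weight_apply, Finsupp.weight_apply, Finsupp.sum, Finsupp.sum,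
    Finset.mul_sum]
  apply Finset.sum_le_sum
  intro i _
  have hi : (i : ℕ) + 1 ≤ g := i.isLt
  simp only [smul_eq_mul]
  calc d i * ((i : ℕ) + 1) ^ 2 = d i * ((i : ℕ) + 1) * ((i : ℕ) + 1) := by ring
    _ ≤ d i * ((i : ℕ) + 1) * g := Nat.mul_le_mul_left _ hi
    _ = g * (d i * ((i : ℕ) + 1)) := by ring

lemma lam_zero (h : ℕ) : lam h 0 = 1 := by simp [lam]

lemma lam_eq_X {h m : ℕ} (h1 : 1 ≤ m) (h2 : m ≤ h) :
    lam h m = X ⟨m - 1, by omega⟩ := by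
  rw [lam, dif_neg (by omega), dif_pos h2]

lemma lam_eq_zero {h m : ℕ} (hm : h < m) : lam h m = 0 := by
  rw [lam, dif_neg (by omega), dif_neg (by omega)]

lemma X_mul_mon {g : ℕ} (a : Fin g) (t : Fin g →₀ ℕ) :
    (X a : MvPolynomial (Fin g) ℚ) * monomial t 1 = monomial (Finsupp.single a 1 + t) 1 := by
  rw [← pow_one (X a : MvPolynomial (Fin g) ℚ), X_pow_eq_monomial, monomial_mul, one_mul]

lemma mumford_mem {h e : ℕ} (h1 : 1 ≤ e) (h2 : e ≤ h) :
    mumford h (2 * e) ∈ mumfordIdeal h :=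
  Ideal.subset_span ⟨2 * e, ⟨by omega, by omega⟩, rfl⟩

lemma sq_lam_mem {g e : ℕ} (h1 : 1 ≤ e) (h2 : e ≤ g) (M : MvPolynomial (Fin g) ℚ)
    (hM : ∀ i ∈ (Finset.range (2 * e + 1)).erase e,
      lam g i * lam g (2 * e - i) * M ∈ Rideal g) :
    lam g e ^ 2 * M ∈ Rideal g := by
  have he : e ∈ Finset.range (2 * e + 1) := by
    simp only [Finset.mem_range]; omega
  have hsplit : mumford g (2 * e) = (-1 : MvPolynomial (Fin g) ℚ) ^ e * lam g e ^ 2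
      + ∑ i ∈ (Finset.range (2 * e + 1)).erase e,
          (-1 : MvPolynomial (Fin g) ℚ) ^ (2 * e - i) * lam g i * lam g (2 * e - i) := by
    rw [mumford, ← Finset.add_sum_erase _ _ he]
    congr 1
    rw [show 2 * e - e = e by omega]
    ring
  have hone : ((-1 : MvPolynomial (Fin g) ℚ)) ^ (e * 2) = 1 := by
    rw [pow_mul', neg_one_sq, one_pow]
  have hT : ∑ i ∈ (Finset.range (2 * e + 1)).erase e,
        (-1 : MvPolynomial (Fin g) ℚ) ^ e *
          ((-1 : MvPolynomial (Fin g) ℚ) ^ (2 * e - i) * (lam g i * lam g (2 * e - i) * M))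
      = (-1 : MvPolynomial (Fin g) ℚ) ^ e *
        ((∑ i ∈ (Finset.range (2 * e + 1)).erase e,
          (-1 : MvPolynomial (Fin g) ℚ) ^ (2 * e - i) * lam g i * lam g (2 * e - i)) * M) := by
    rw [Finset.sum_mul, Finset.mul_sum]
    apply Finset.sum_congr rfl
    intro i _
    ring
  have hkey : lam g e ^ 2 * M
      = (-1 : MvPolynomial (Fin g) ℚ) ^ e * (mumford g (2 * e) * M)
        - ∑ i ∈ (Finset.range (2 * e + 1)).erase e,
            (-1 : MvPolynomial (Fin g) ℚ) ^ e *
              ((-1 : MvPolynomial (Fin g) ℚ) ^ (2 * e - i) *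
                (lam g i * lam g (2 * e - i) * M)) := by
    rw [hT, hsplit]
    linear_combination (-(lam g e ^ 2 * M)) * hone
  rw [hkey]
  apply sub_mem
  · apply Ideal.mul_mem_left
    have : mumford g (2 * e) * M ∈ mumfordIdeal g :=
      Ideal.mul_mem_right _ _ (mumford_mem h1 h2)
    exact Ideal.mem_sup_left this
  · exact Ideal.sum_mem _ fun i hi =>
      Ideal.mul_mem_left _ _ (Ideal.mul_mem_left _ _ (hM i hi))

lemma monomial_mem (g : ℕ) (hg : 1 ≤ g) :
    ∀ n (d : Fin g →₀ ℕ), g * W g d - S g d = n → g * (g - 1) / 2 < W g d →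
      (monomial d (1 : ℚ) : MvPolynomial (Fin g) ℚ) ∈ Rideal g := by
  intro n
  induction n using Nat.strong_induction_on with
  | _ n IH =>
  intro d hn hd
  set top : Fin g := ⟨g - 1, by omega⟩ with htopdef
  by_cases htop : d top = 0
  · by_cases hsq : ∃ j : Fin g, 2 ≤ d j
    · -- a variable occurs with multiplicity ≥ 2: rewrite using the Mumford relation
      obtain ⟨j, hj⟩ := hsq
      set e : ℕ := (j : ℕ) + 1 with hedef
      have hje : ((j : ℕ) + 1 : ℕ) = e := hedef.symm
      have he1 : 1 ≤ e := by omega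
      have he2 : e ≤ g := j.isLt
      set d'' : Fin g →₀ ℕ := d - Finsupp.single j 2 with hd''def
      have hdd : d = Finsupp.single j 2 + d'' := by
        ext a
        rw [hd''def]
        by_cases hja : j = a
        · subst hja
          simp only [Finsupp.add_apply, Finsupp.tsub_apply, Finsupp.single_eq_same]
          omega
        · simp [Finsupp.add_apply, Finsupp.tsub_apply, Finsupp.single_eq_of_ne' hja]
      have hWd : W g d = 2 * e + W g d'' := by
        rw [hdd, W_add, W_single, hje]
      have hSd : S g d = 2 * e ^ 2 + S g d'' := by
        rw [hdd, S_add, S_single, hje]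
      have hIH2 : ∀ d' : Fin g →₀ ℕ, W g d' = W g d → S g d + 1 ≤ S g d' →
          (monomial d' (1 : ℚ) : MvPolynomial (Fin g) ℚ) ∈ Rideal g := by
        intro d' hW' hS'
        have h1 := S_le d'
        rw [hW'] at h1
        refine IH (g * W g d - S g d') ?_ d' ?_ ?_
        · omega
        · rw [hW']
        · rw [hW']; exact hd
      have hlamj : lam g e = X j := by
        rw [lam_eq_X he1 he2]
        exact congrArg X (Fin.val_inj.mp (show e - 1 = (j : ℕ) by omega))
      have hmon : (monomial d (1 : ℚ) : MvPolynomial (Fin g) ℚ)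
          = lam g e ^ 2 * monomial d'' 1 := by
        rw [hlamj, X_pow_eq_monomial, monomial_mul, one_mul, ← hdd]
      rw [hmon]
      apply sq_lam_mem he1 he2
      intro i hi
      obtain ⟨hie, hir⟩ := Finset.mem_erase.mp hi
      rw [Finset.mem_range] at hir
      by_cases hig : g < i
      · rw [lam_eq_zero hig, zero_mul, zero_mul]; exact zero_mem _
      by_cases hjg : g < 2 * e - i
      · rw [lam_eq_zero hjg, mul_zero, zero_mul]; exact zero_mem _
      push_neg at hig hjg
      rcases Nat.eq_zero_or_pos i with hi0 | hipos
      · -- i = 0, the other factor is λ_{2e}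
        subst hi0
        have h2e : 2 * e ≤ g := by omega
        have hxa : lam g (2 * e) = X (⟨2 * e - 1, by omega⟩ : Fin g) :=
          lam_eq_X (by omega) h2e
        rw [lam_zero, one_mul, Nat.sub_zero, hxa, X_mul_mon]
        apply hIH2
        · rw [W_add, W_single, hWd]
          have ha : ((⟨2 * e - 1, by omega⟩ : Fin g) : ℕ) = 2 * e - 1 := rfl
          rw [ha]
          omega
        · rw [S_add, S_single, hSd]
          have ha : ((⟨2 * e - 1, by omega⟩ : Fin g) : ℕ) = 2 * e - 1 := rfl
          rw [ha]
          have h2 : 1 * ((2 * e - 1) + 1) ^ 2 = 4 * e ^ 2 := by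
            rw [show 2 * e - 1 + 1 = 2 * e from by omega]; ring
          rw [h2]
          have h3 : 0 < e ^ 2 := by positivity
          omega
      rcases Nat.eq_zero_or_pos (2 * e - i) with hj0 | hjpos
      · -- i = 2e, the first factor is λ_{2e}
        have hi2e : i = 2 * e := by omega
        have h2e : 2 * e ≤ g := by omega
        have hxa : lam g (2 * e) = X (⟨2 * e - 1, by omega⟩ : Fin g) :=
          lam_eq_X (by omega) h2e
        rw [hj0, lam_zero, mul_one, hi2e, hxa, X_mul_mon]
        apply hIH2
        · rw [W_add, W_single, hWd]
          have ha : ((⟨2 * e - 1, by omega⟩ : Fin g) : ℕ) = 2 * e - 1 := rfl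
          rw [ha]
          omega
        · rw [S_add, S_single, hSd]
          have ha : ((⟨2 * e - 1, by omega⟩ : Fin g) : ℕ) = 2 * e - 1 := rfl
          rw [ha]
          have h2 : 1 * ((2 * e - 1) + 1) ^ 2 = 4 * e ^ 2 := by
            rw [show 2 * e - 1 + 1 = 2 * e from by omega]; ring
          rw [h2]
          have h3 : 0 < e ^ 2 := by positivity
          omega
      · -- both factors are genuine variables λ_i, λ_{2e−i}
        set m : ℕ := 2 * e - i with hmdef
        have hijm : i + m = 2 * e := by omega
        have hxa : lam g i = X (⟨i - 1, by omega⟩ : Fin g) := lam_eq_X hipos hig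
        have hxb : lam g m = X (⟨m - 1, by omega⟩ : Fin g) := lam_eq_X hjpos hjg
        have hsqgt : 2 * e ^ 2 < i ^ 2 + m ^ 2 := by
          have h1 : (i : ℤ) + (m : ℤ) = 2 * (e : ℤ) := by exact_mod_cast hijm
          have h2 : (i : ℤ) ≠ (e : ℤ) := fun hc => hie (by exact_mod_cast hc)
          have h3 : ((i : ℤ) - (e : ℤ)) ≠ 0 := sub_ne_zero.mpr h2
          have h4 : 0 < ((i : ℤ) - (e : ℤ)) ^ 2 :=
            lt_of_le_of_ne (sq_nonneg _) (Ne.symm (pow_ne_zero 2 h3))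
          have h5 : (2 : ℤ) * (e : ℤ) ^ 2 < (i : ℤ) ^ 2 + (m : ℤ) ^ 2 := by
            nlinarith [h4, h1]
          exact_mod_cast h5
        rw [hxa, hxb, mul_assoc, X_mul_mon, X_mul_mon]
        apply hIH2
        · rw [W_add, W_single, W_add, W_single, hWd]
          have ha : ((⟨i - 1, by omega⟩ : Fin g) : ℕ) = i - 1 := rfl
          have hb : ((⟨m - 1, by omega⟩ : Fin g) : ℕ) = m - 1 := rfl
          rw [ha, hb]
          omega
        · rw [S_add, S_single, S_add, S_single, hSd]
          have ha : ((⟨i - 1, by omega⟩ : Fin g) : ℕ) = i - 1 := rfl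
          have hb : ((⟨m - 1, by omega⟩ : Fin g) : ℕ) = m - 1 := rfl
          rw [ha, hb]
          have e1 : 1 * ((i - 1) + 1) ^ 2 = i ^ 2 := by
            rw [show i - 1 + 1 = i from by omega]; ring
          have e2 : 1 * ((m - 1) + 1) ^ 2 = m ^ 2 := by
            rw [show m - 1 + 1 = m from by omega]; ring
          rw [e1, e2]
          omega
    · -- square-free monomial not containing λ_g: its degree is at most g(g−1)/2
      exfalso
      push_neg at hsq
      have hone : ∀ j : Fin g, d j ≤ 1 := fun j => by
        have := hsq j; omega
      have hb1 : W g d ≤ ∑ i ∈ d.support, ((i : ℕ) + 1) := by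
        rw [W, Finsupp.weight_apply, Finsupp.sum]
        apply Finset.sum_le_sum
        intro i _
        simpa [smul_eq_mul] using Nat.mul_le_mul_right ((i : ℕ) + 1) (hone i)
      have hb2 : ∑ i ∈ d.support, ((i : ℕ) + 1)
          ≤ ∑ i ∈ Finset.univ.erase top, ((i : ℕ) + 1) := by
        apply Finset.sum_le_sum_of_subset
        intro i hi
        refine Finset.mem_erase.mpr ⟨?_, Finset.mem_univ i⟩
        rintro rfl
        exact (Finsupp.mem_support_iff.mp hi) htop
      have hb3 : (∑ i ∈ Finset.univ.erase top, ((i : ℕ) + 1)) + ((top : ℕ) + 1)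
          = ∑ i : Fin g, ((i : ℕ) + 1) :=
        Finset.sum_erase_add _ _ (Finset.mem_univ top)
      have hb4 : ∑ i : Fin g, ((i : ℕ) + 1) = ∑ i ∈ Finset.range g, (i + 1) :=
        Fin.sum_univ_eq_sum_range (fun i => i + 1) g
      have hb5 : (∑ i ∈ Finset.range g, (i + 1)) * 2 = g * (g + 1) := by
        have h1 : (∑ i ∈ Finset.range (g + 1), i)
            = (∑ i ∈ Finset.range g, (i + 1)) + 0 :=
          Finset.sum_range_succ' (fun i => i) g
        have h2 := Finset.sum_range_id_mul_two (g + 1)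
        rw [h1, add_zero] at h2
        rw [h2, Nat.add_sub_cancel, Nat.mul_comm]
      have htopval : ((top : ℕ) + 1) = g := by
        have h1 : (top : ℕ) = g - 1 := rfl
        omega
      have hgg : g * (g + 1) = g * (g - 1) + 2 * g := by
        obtain ⟨t, rfl⟩ := Nat.exists_eq_add_of_le hg
        rw [show 1 + t - 1 = t from by omega]
        ring
      have hW2 : 2 * W g d ≤ g * (g - 1) := by linarith
      have hfin : W g d ≤ g * (g - 1) / 2 :=
        (Nat.le_div_iff_mul_le two_pos).mpr (by omega)
      exact absurd hfin (not_le.mpr hd)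
  · -- the monomial contains λ_g
    have hlam : lam g g = X top := lam_eq_X hg le_rfl
    have hfs : Finsupp.single top 1 + (d - Finsupp.single top 1) = d := by
      ext a
      by_cases hta : top = a
      · subst hta
        simp only [Finsupp.add_apply, Finsupp.tsub_apply, Finsupp.single_eq_same]
        omega
      · simp [Finsupp.add_apply, Finsupp.tsub_apply, Finsupp.single_eq_of_ne' hta]
    have hdd : (monomial d (1 : ℚ) : MvPolynomial (Fin g) ℚ)
        = lam g g * monomial (d - Finsupp.single top 1) 1 := by
      rw [hlam, X_mul_mon, hfs]
    rw [hdd]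
    exact Ideal.mem_sup_right
      (Ideal.mul_mem_right _ _ (Ideal.subset_span (Set.mem_singleton _)))

end VdGAux

/-- **Vanishing above the socle degree (van der Geer).**
For `g ≥ 1`, every homogeneous element of `ℛ_g` of degree `k > g(g−1)/2` vanishes. -/
theorem Rring_vanishing (g : ℕ) (hg : 1 ≤ g) (k : ℕ) (hk : g * (g - 1) / 2 < k)
    (x : Rring g) (hx : x ∈ homogR g k) : x = 0 := by
  obtain ⟨P, hP, rfl⟩ := hx
  have hP' : MvPolynomial.IsWeightedHomogeneous (fun i : Fin g => (i : ℕ) + 1) P k := hP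
  show (Ideal.Quotient.mkₐ ℚ (Rideal g)) P = 0
  rw [Ideal.Quotient.mkₐ_eq_mk, Ideal.Quotient.eq_zero_iff_mem]
  rw [P.as_sum]
  apply Ideal.sum_mem
  intro d hd
  have hw : Finsupp.weight (fun i : Fin g => (i : ℕ) + 1) d = k :=
    hP' (mem_support_iff.mp hd)
  have hWd : VdGAux.W g d = k := hw
  have h1 : (monomial d (coeff d P) : MvPolynomial (Fin g) ℚ)
      = C (coeff d P) * monomial d 1 := by
    rw [C_mul_monomial, mul_one]
  rw [h1]
  exact Ideal.mul_mem_left _ _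
    (VdGAux.monomial_mem g hg _ d rfl (by rw [hWd]; exact hk))

end
end

section
/- Let g ≥ 2. With the conventions λ_0 = 1 and λ_m = 0 for m < 0 or m > g, let D be the (g−1)×(g−1) matrix over ℛ_g whose (i,j) entry is the class of λ_{g−2i+j} for 1 ≤ i, j ≤ g−1. Then det D = λ_1·λ_2·⋯·λ_{g−1} in ℛ_g. -/
open MvPolynomial

noncomputable section

/-- `λ_m` with an integer index: `λ_0 = 1` and `λ_m = 0` for `m < 0` or `m > h`. -/
def lamZ (h : ℕ) (m : ℤ) : MvPolynomial (Fin h) ℚ :=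
  if _h0 : m = 0 then 1
  else if _hm : 1 ≤ m ∧ m ≤ (h : ℤ) then X ⟨m.toNat - 1, by omega⟩ else 0

namespace JT

lemma lam_zero (h : ℕ) : lam h 0 = 1 := by simp [lam]

lemma lam_of_le (h m : ℕ) (h0 : m ≠ 0) (hm : m ≤ h) :
    lam h m = X ⟨m - 1, by omega⟩ := by
  rw [lam, dif_neg h0, dif_pos hm]

lemma lam_of_gt (h m : ℕ) (hm : h < m) : lam h m = 0 := by
  rw [lam, dif_neg (by omega), dif_neg (by omega)]

lemma lamZ_coe (h m : ℕ) : lamZ h (m : ℤ) = lam h m := by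
  by_cases h0 : m = 0
  · simp [h0, lamZ, lam]
  · by_cases hm : m ≤ h
    · rw [lamZ, dif_neg (by exact_mod_cast h0), dif_pos (by constructor <;> omega),
        lam_of_le h m h0 hm]
      simp
    · rw [lamZ, dif_neg (by exact_mod_cast h0), dif_neg (by omega), lam_of_gt h m (by omega)]

lemma lamZ_neg (h : ℕ) (q : ℤ) (hq : q < 0) : lamZ h q = 0 := by
  rw [lamZ, dif_neg (by omega), dif_neg (by omega)]

lemma lamZ_gt (h : ℕ) (q : ℤ) (hq : (h : ℤ) < q) : lamZ h q = 0 := by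
  rw [lamZ, dif_neg (by omega), dif_neg (by omega)]

end JT

namespace JT

lemma mem_lamtop (g : ℕ) : lam g g ∈ Rideal g :=
  Ideal.mem_sup_right (Ideal.subset_span rfl)

lemma mem_mumford (g d : ℕ) (h1 : 1 ≤ d) (h2 : d ≤ 2 * g) : mumford g d ∈ Rideal g :=
  Ideal.mem_sup_left (Ideal.subset_span ⟨d, ⟨h1, h2⟩, rfl⟩)

lemma mumford_eval (n : ℕ) :
    mumford (n + 2) (2 * n + 2) =
      (-1) ^ (n + 2) * lam (n + 2) n * lam (n + 2) (n + 2)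
        + (-1) ^ (n + 1) * lam (n + 2) (n + 1) * lam (n + 2) (n + 1)
        + (-1) ^ n * lam (n + 2) (n + 2) * lam (n + 2) n := by
  rw [mumford]
  rw [show (2 * n + 2 + 1) = 2 * n + 3 from rfl]
  have hsub : ({n, n + 1, n + 2} : Finset ℕ) ⊆ Finset.range (2 * n + 3) := by
    intro x hx
    simp only [Finset.mem_insert, Finset.mem_singleton] at hx
    rcases hx with rfl | rfl | rfl <;> simp [Finset.mem_range] <;> omega
  rw [← Finset.sum_subset hsub]
  · rw [Finset.sum_insert (by simp), Finset.sum_insert (by simp),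
      Finset.sum_singleton]
    have e1 : 2 * n + 2 - n = n + 2 := by omega
    have e2 : 2 * n + 2 - (n + 1) = n + 1 := by omega
    have e3 : 2 * n + 2 - (n + 2) = n := by omega
    rw [e1, e2, e3]
    ring
  · intro x hx hnx
    simp only [Finset.mem_insert, Finset.mem_singleton, not_or] at hnx
    rcases Nat.lt_or_ge x n with hlt | hge
    · rw [lam_of_gt (n + 2) (2 * n + 2 - x) (by omega)]
      ring
    · rw [lam_of_gt (n + 2) x (by omega)]
      ring

lemma sq_mem (n : ℕ) :
    lam (n + 2) (n + 1) * lam (n + 2) (n + 1) ∈ Rideal (n + 2) := by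
  have key : lam (n + 2) (n + 1) * lam (n + 2) (n + 1) =
      (-1) ^ (n + 1) * mumford (n + 2) (2 * n + 2)
        + (2 : MvPolynomial (Fin (n+2)) ℚ) * lam (n + 2) n * lam (n + 2) (n + 2) := by
    rw [mumford_eval n]
    have h1 : ((-1 : MvPolynomial (Fin (n+2)) ℚ)) ^ (n * 2) = 1 :=
      Even.neg_one_pow ⟨n, by ring⟩
    ring_nf
    rw [h1]
    ring
  rw [key]
  refine Ideal.add_mem _ (Ideal.mul_mem_left _ _ (mem_mumford _ _ (by omega) (by omega))) ?_
  exact Ideal.mul_mem_left _ _ (mem_lamtop (n + 2))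

end JT

namespace JT

/-- Kill the last variable, mapping to one fewer variables. -/
def psi (n : ℕ) : MvPolynomial (Fin (n + 2)) ℚ →ₐ[ℚ] MvPolynomial (Fin (n + 1)) ℚ :=
  aeval (fun k : Fin (n + 2) =>
    if h : (k : ℕ) < n + 1 then X ⟨(k : ℕ), h⟩ else 0)

/-- Inclusion of polynomial rings. -/
def sig (n : ℕ) : MvPolynomial (Fin (n + 1)) ℚ →ₐ[ℚ] MvPolynomial (Fin (n + 2)) ℚ :=
  rename Fin.castSucc

def phi (n : ℕ) : MvPolynomial (Fin (n + 2)) ℚ →+* Rring (n + 1) :=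
  (Ideal.Quotient.mk (Rideal (n + 1))).comp (psi n).toRingHom

lemma phi_lam (n m : ℕ) :
    phi n (lam (n + 2) m) = Ideal.Quotient.mk (Rideal (n + 1)) (lam (n + 1) m) := by
  by_cases h0 : m = 0
  · simp [h0, lam_zero, phi]
  · rcases Nat.lt_or_ge m (n + 2) with hm | hm
    · -- 1 ≤ m ≤ n+1
      rw [lam_of_le (n + 2) m h0 (by omega), lam_of_le (n + 1) m h0 (by omega)]
      rw [phi]
      simp only [RingHom.coe_comp, Function.comp_apply, AlgHom.toRingHom_eq_coe,
        RingHom.coe_coe, psi, aeval_X, Fin.val_mk]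
      rw [dif_pos (by omega : m - 1 < n + 1)]
    · rcases Nat.eq_or_lt_of_le hm with hm2 | hm2
      · -- m = n + 2
        rw [lam_of_le (n + 2) m h0 (by omega), lam_of_gt (n + 1) m (by omega)]
        rw [phi]
        simp only [RingHom.coe_comp, Function.comp_apply, AlgHom.toRingHom_eq_coe,
          RingHom.coe_coe, psi, aeval_X, Fin.val_mk]
        rw [dif_neg (by omega : ¬ m - 1 < n + 1)]
      · rw [lam_of_gt (n + 2) m (by omega), lam_of_gt (n + 1) m (by omega)]
        simp

lemma phi_lamZ (n : ℕ) (q : ℤ) :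
    phi n (lamZ (n + 2) q) = Ideal.Quotient.mk (Rideal (n + 1)) (lamZ (n + 1) q) := by
  rcases lt_or_ge q 0 with hq | hq
  · rw [lamZ_neg _ _ hq, lamZ_neg _ _ hq]; simp
  · obtain ⟨m, rfl⟩ := Int.eq_ofNat_of_zero_le hq
    rw [lamZ_coe, lamZ_coe, phi_lam]

lemma mumford_eq_zero_of_gt (h d : ℕ) (hd : 2 * h < d) : mumford h d = 0 := by
  rw [mumford]
  apply Finset.sum_eq_zero
  intro i _
  rcases Nat.lt_or_ge h i with hi | hi
  · rw [lam_of_gt h i hi]; ring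
  · rw [lam_of_gt h (d - i) (by omega)]; ring

lemma phi_mumford (n d : ℕ) :
    phi n (mumford (n + 2) d) = Ideal.Quotient.mk (Rideal (n + 1)) (mumford (n + 1) d) := by
  rw [mumford, mumford, map_sum, map_sum]
  apply Finset.sum_congr rfl
  intro i _
  rw [map_mul, map_mul, map_pow, map_neg, map_one, phi_lam, phi_lam, map_mul, map_mul,
    map_pow, map_neg, map_one]

lemma phi_ideal (n : ℕ) : ∀ p ∈ Rideal (n + 2), phi n p = 0 := by
  intro p hp
  have : Rideal (n + 2) ≤ RingHom.ker (phi n) := by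
    rw [Rideal, sup_le_iff]
    constructor
    · rw [mumfordIdeal, Ideal.span_le]
      rintro _ ⟨d, ⟨hd1, hd2⟩, rfl⟩
      simp only [SetLike.mem_coe, RingHom.mem_ker]
      rw [phi_mumford]
      rcases Nat.lt_or_ge (2 * (n + 1)) d with hd | hd
      · rw [mumford_eq_zero_of_gt (n + 1) d hd]; simp
      · rw [Ideal.Quotient.eq_zero_iff_mem]
        exact mem_mumford (n + 1) d hd1 hd
    · rw [Ideal.span_le]
      rintro _ rfl
      simp only [SetLike.mem_coe, RingHom.mem_ker]
      rw [phi_lam, lam_of_gt (n + 1) (n + 2) (by omega)]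
      simp
  exact this hp

def piMap (n : ℕ) : Rring (n + 2) →+* Rring (n + 1) :=
  Ideal.Quotient.lift (Rideal (n + 2)) (phi n) (phi_ideal n)

lemma piMap_mk (n : ℕ) (p : MvPolynomial (Fin (n + 2)) ℚ) :
    piMap n (Ideal.Quotient.mk (Rideal (n + 2)) p) = phi n p :=
  Ideal.Quotient.lift_mk _ _ _

end JT

namespace JT

lemma sig_lam (n m : ℕ) :
    sig n (lam (n + 1) m) = if m = n + 2 then 0 else lam (n + 2) m := by
  by_cases h0 : m = 0
  · subst h0
    rw [if_neg (by omega), lam_zero, lam_zero, map_one]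
  · rcases Nat.lt_or_ge m (n + 2) with hm | hm
    · rw [if_neg (by omega), lam_of_le (n + 1) m h0 (by omega),
        lam_of_le (n + 2) m h0 (by omega), sig, rename_X]
      congr 1
    · rcases Nat.eq_or_lt_of_le hm with hm2 | hm2
      · rw [if_pos hm2.symm, lam_of_gt (n + 1) m (by omega), map_zero]
      · rw [if_neg (by omega), lam_of_gt (n + 1) m (by omega),
          lam_of_gt (n + 2) m (by omega), map_zero]

lemma sig_mumford_diff (n d : ℕ) :
    mumford (n + 2) d - sig n (mumford (n + 1) d) ∈ Ideal.span {lam (n + 2) (n + 2)} := by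
  rw [mumford, mumford, map_sum, ← Finset.sum_sub_distrib]
  apply Ideal.sum_mem
  intro i _
  rw [map_mul, map_mul, map_pow, map_neg, map_one, sig_lam, sig_lam]
  by_cases hi : i = n + 2
  · rw [if_pos hi]
    refine Ideal.mem_span_singleton.mpr ⟨(-1) ^ (d - i) * lam (n + 2) (d - i), ?_⟩
    rw [hi]
    ring
  · rw [if_neg hi]
    by_cases hdi : d - i = n + 2
    · rw [if_pos hdi]
      refine Ideal.mem_span_singleton.mpr ⟨(-1) ^ (d - i) * lam (n + 2) i, ?_⟩
      rw [hdi]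
      ring
    · rw [if_neg hdi]
      simp

lemma X_top_mem (n : ℕ) (h : n + 1 < n + 2) :
    (X ⟨n + 1, h⟩ : MvPolynomial (Fin (n + 2)) ℚ) ∈ Ideal.span {lam (n + 2) (n + 2)} := by
  rw [show lam (n + 2) (n + 2) = X ⟨n + 1, h⟩ from lam_of_le (n + 2) (n + 2) (by omega) le_rfl]
  exact Ideal.subset_span rfl

lemma sub_sig_psi_mem (n : ℕ) (p : MvPolynomial (Fin (n + 2)) ℚ) :
    p - sig n (psi n p) ∈ Ideal.span {lam (n + 2) (n + 2)} := by
  induction p using MvPolynomial.induction_on with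
  | C a =>
    have : sig n (psi n (C a)) = C a := by
      rw [psi, sig]
      simp [aeval_C, algebraMap_eq]
    rw [this, sub_self]
    exact Ideal.zero_mem _
  | add p q hp hq =>
    have : p + q - sig n (psi n (p + q)) =
        (p - sig n (psi n p)) + (q - sig n (psi n q)) := by
      rw [map_add, map_add]
      ring
    rw [this]
    exact Ideal.add_mem _ hp hq
  | mul_X p k hp =>
    have e : sig n (psi n (p * X k)) = sig n (psi n p) * sig n (psi n (X k)) := by
      rw [map_mul, map_mul]
    by_cases hk : (k : ℕ) < n + 1
    · have hXk : sig n (psi n (X k)) = X k := by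
        rw [psi, sig]
        simp only [aeval_X]
        rw [dif_pos hk, rename_X]
        congr 1
      have : p * X k - sig n (psi n (p * X k)) = (p - sig n (psi n p)) * X k := by
        rw [e, hXk]
        ring
      rw [this]
      exact Ideal.mul_mem_right _ _ hp
    · have hXk : psi n (X k) = 0 := by
        rw [psi]
        simp only [aeval_X]
        rw [dif_neg hk]
      have hk2 : k = ⟨n + 1, by omega⟩ := by
        have := k.isLt
        exact Fin.ext (by simp only [Fin.val_mk]; omega)
      rw [e, hXk, map_zero, mul_zero, sub_zero, hk2]
      exact Ideal.mul_mem_left _ _ (X_top_mem n (by omega))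

lemma ker_piMap (n : ℕ) (x : Rring (n + 2)) (hx : piMap n x = 0) :
    ∃ c : Rring (n + 2),
      x = c * Ideal.Quotient.mk (Rideal (n + 2)) (lam (n + 2) (n + 1)) := by
  obtain ⟨p, rfl⟩ := Ideal.Quotient.mk_surjective x
  rw [piMap_mk] at hx
  have hpsi : psi n p ∈ Rideal (n + 1) := by
    rwa [phi, RingHom.comp_apply, Ideal.Quotient.eq_zero_iff_mem] at hx
  set J : Ideal (MvPolynomial (Fin (n + 2)) ℚ) :=
    Rideal (n + 2) ⊔ Ideal.span {lam (n + 2) (n + 1)} with hJ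
  have hRle : Rideal (n + 2) ≤ J := le_sup_left
  have hspanle : Ideal.span {lam (n + 2) (n + 2)} ≤ J := by
    refine le_trans ?_ hRle
    rw [Ideal.span_le]
    rintro _ rfl
    exact mem_lamtop (n + 2)
  have hσ : sig n (psi n p) ∈ J := by
    have h1 : Rideal (n + 1) =
        Ideal.span ((mumford (n + 1) '' Set.Icc 1 (2 * (n + 1))) ∪ {lam (n + 1) (n + 1)}) := by
      rw [Rideal, mumfordIdeal, ← Ideal.span_union]
    have h2 : sig n (psi n p) ∈ Ideal.map (sig n) (Rideal (n + 1)) :=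
      Ideal.mem_map_of_mem _ hpsi
    rw [h1, Ideal.map_span] at h2
    refine Ideal.span_le.mpr ?_ h2
    rintro _ ⟨s, hs, rfl⟩
    rcases hs with ⟨d, ⟨hd1, hd2⟩, rfl⟩ | rfl
    · have hdiff := sig_mumford_diff n d
      have heq : sig n (mumford (n + 1) d) =
          mumford (n + 2) d - (mumford (n + 2) d - sig n (mumford (n + 1) d)) := by ring
      rw [heq]
      exact Ideal.sub_mem _ (hRle (mem_mumford (n + 2) d hd1 (by omega))) (hspanle hdiff)
    · rw [sig_lam, if_neg (by omega)]
      exact Ideal.mem_sup_right (Ideal.subset_span rfl)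
  have hsub : p - sig n (psi n p) ∈ J := hspanle (sub_sig_psi_mem n p)
  have hpJ : p ∈ J := by
    have : p = (p - sig n (psi n p)) + sig n (psi n p) := by ring
    rw [this]
    exact Ideal.add_mem _ hsub hσ
  obtain ⟨r, hr, s, hs, rfl⟩ := Submodule.mem_sup.mp hpJ
  obtain ⟨c, hc⟩ := Ideal.mem_span_singleton'.mp hs
  refine ⟨Ideal.Quotient.mk _ c, ?_⟩
  rw [map_add, Ideal.Quotient.eq_zero_iff_mem.mpr hr, zero_add, ← hc, map_mul]

end JT

namespace JT

lemma mk_lamZ_hi (n : ℕ) (q : ℤ) (hq : ((n + 2 : ℕ) : ℤ) ≤ q) :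
    Ideal.Quotient.mk (Rideal (n + 2)) (lamZ (n + 2) q) = 0 := by
  rcases eq_or_lt_of_le hq with h | h
  · rw [← h, lamZ_coe]
    exact Ideal.Quotient.eq_zero_iff_mem.mpr (mem_lamtop (n + 2))
  · rw [lamZ_gt _ _ (by exact_mod_cast h), map_zero]

set_option synthInstance.maxHeartbeats 1000000 in
set_option maxHeartbeats 1000000 in
theorem key (n : ℕ) :
    (Matrix.of fun i j : Fin (n + 1) =>
        Ideal.Quotient.mk (Rideal (n + 2))
          (lamZ (n + 2) (((n + 2 : ℕ) : ℤ) - 2 * ((i : ℤ) + 1) + ((j : ℤ) + 1)))).det =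
      Ideal.Quotient.mk (Rideal (n + 2)) (∏ j ∈ Finset.Icc 1 (n + 1), lam (n + 2) j) := by
  induction n with
  | zero =>
    rw [Matrix.det_fin_one, Matrix.of_apply]
    rw [show (((0 + 2 : ℕ) : ℤ) - 2 * (((0 : Fin 1) : ℤ) + 1) + (((0 : Fin 1) : ℤ) + 1))
        = ((1 : ℕ) : ℤ) by norm_num, lamZ_coe]
    rw [show Finset.Icc 1 (0 + 1) = {1} from Finset.Icc_self 1, Finset.prod_singleton]
  | succ n ih =>
    rw [Matrix.det_succ_row_zero]
    rw [Finset.sum_eq_single_of_mem 0 (Finset.mem_univ _) ?hzero]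
    case hzero =>
      intro j _ hj
      have hj1 : 1 ≤ (j : ℕ) := by
        rcases Nat.eq_zero_or_pos (j : ℕ) with h | h
        · exact absurd (Fin.ext h) hj
        · exact h
      rw [Matrix.of_apply]
      rw [mk_lamZ_hi (n + 1) _ (by simp only [Fin.val_zero]; push_cast; omega)]
      ring
    rw [Fin.succAbove_zero, Matrix.of_apply]
    rw [show ((((n + 1) + 2 : ℕ) : ℤ) - 2 * (((0 : Fin (n + 2)) : ℤ) + 1)
        + (((0 : Fin (n + 2)) : ℤ) + 1)) = ((n + 2 : ℕ) : ℤ) by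
          simp only [Fin.val_zero]; push_cast; ring, lamZ_coe]
    simp only [Fin.val_zero, pow_zero, one_mul]
    -- the minor is the staircase matrix for n+2 variables, with entries in Rring (n+3)
    have hsub : (Matrix.of fun i j : Fin (n + 2) =>
          Ideal.Quotient.mk (Rideal (n + 1 + 2))
            (lamZ (n + 1 + 2)
              ((((n + 1) + 2 : ℕ) : ℤ) - 2 * ((i : ℤ) + 1) + ((j : ℤ) + 1)))).submatrix
          Fin.succ Fin.succ =
        Matrix.of (fun i j : Fin (n + 1) =>
          Ideal.Quotient.mk (Rideal (n + 3))
            (lamZ (n + 3) (((n + 2 : ℕ) : ℤ) - 2 * ((i : ℤ) + 1) + ((j : ℤ) + 1)))) := by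
      ext i j
      rw [Matrix.submatrix_apply, Matrix.of_apply, Matrix.of_apply]
      congr 2
      push_cast [Fin.val_succ]
      ring
    rw [hsub]
    set M' := Matrix.of (fun i j : Fin (n + 1) =>
      Ideal.Quotient.mk (Rideal (n + 3))
        (lamZ (n + 3) (((n + 2 : ℕ) : ℤ) - 2 * ((i : ℤ) + 1) + ((j : ℤ) + 1)))) with hM'
    have hdet' : piMap (n + 1) M'.det =
        Ideal.Quotient.mk (Rideal (n + 2)) (∏ j ∈ Finset.Icc 1 (n + 1), lam (n + 2) j) := by
      rw [RingHom.map_det, RingHom.mapMatrix_apply]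
      have hmap : M'.map (piMap (n + 1)) =
          Matrix.of (fun i j : Fin (n + 1) =>
            Ideal.Quotient.mk (Rideal (n + 2))
              (lamZ (n + 2) (((n + 2 : ℕ) : ℤ) - 2 * ((i : ℤ) + 1) + ((j : ℤ) + 1)))) := by
        ext i j
        rw [Matrix.map_apply, hM', Matrix.of_apply, Matrix.of_apply, piMap_mk, phi_lamZ]
      rw [hmap, ih]
    have hprod : piMap (n + 1)
          (Ideal.Quotient.mk (Rideal (n + 3)) (∏ j ∈ Finset.Icc 1 (n + 1), lam (n + 3) j)) =
        Ideal.Quotient.mk (Rideal (n + 2)) (∏ j ∈ Finset.Icc 1 (n + 1), lam (n + 2) j) := by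
      rw [piMap_mk, map_prod (phi (n + 1)) (fun j => lam (n + 3) j) (Finset.Icc 1 (n + 1)),
        map_prod (Ideal.Quotient.mk (Rideal (n + 2))) (fun j => lam (n + 2) j)
          (Finset.Icc 1 (n + 1))]
      exact Finset.prod_congr rfl (fun j _ => phi_lam (n + 1) j)
    have hker : piMap (n + 1)
        (M'.det - Ideal.Quotient.mk (Rideal (n + 3))
          (∏ j ∈ Finset.Icc 1 (n + 1), lam (n + 3) j)) = 0 := by
      rw [map_sub, hdet', hprod, sub_self]
    obtain ⟨c, hc⟩ := ker_piMap (n + 1) _ hker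
    have hMdet : M'.det = Ideal.Quotient.mk (Rideal (n + 3))
          (∏ j ∈ Finset.Icc 1 (n + 1), lam (n + 3) j)
        + c * Ideal.Quotient.mk (Rideal (n + 3)) (lam (n + 3) (n + 2)) := by
      rw [← hc]; ring
    rw [hMdet]
    have hsq : Ideal.Quotient.mk (Rideal (n + 3)) (lam (n + 3) (n + 2))
        * Ideal.Quotient.mk (Rideal (n + 3)) (lam (n + 3) (n + 2)) = 0 := by
      rw [← map_mul]
      exact Ideal.Quotient.eq_zero_iff_mem.mpr (sq_mem (n + 1))
    have hfin : (∏ j ∈ Finset.Icc 1 (n + 1 + 1), lam (n + 3) j)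
        = (∏ j ∈ Finset.Icc 1 (n + 1), lam (n + 3) j) * lam (n + 3) (n + 2) :=
      Finset.prod_Icc_succ_top (by omega) _
    rw [hfin, map_mul]
    rw [mul_add]
    have : Ideal.Quotient.mk (Rideal (n + 1 + 2)) (lam (n + 1 + 2) (n + 1 + 1))
        = Ideal.Quotient.mk (Rideal (n + 3)) (lam (n + 3) (n + 2)) := rfl
    rw [this]
    rw [mul_comm (Ideal.Quotient.mk (Rideal (n + 3)) (lam (n + 3) (n + 2)))
      (Ideal.Quotient.mk (Rideal (n + 3)) (∏ j ∈ Finset.Icc 1 (n + 1), lam (n + 3) j))]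
    rw [show Ideal.Quotient.mk (Rideal (n + 3)) (lam (n + 3) (n + 2))
        * (c * Ideal.Quotient.mk (Rideal (n + 3)) (lam (n + 3) (n + 2)))
        = c * (Ideal.Quotient.mk (Rideal (n + 3)) (lam (n + 3) (n + 2))
            * Ideal.Quotient.mk (Rideal (n + 3)) (lam (n + 3) (n + 2))) by ring, hsq,
      mul_zero, add_zero]

end JT

/-- **The dual Jacobi–Trudi determinant for the staircase partition in ℛ_g.**
For `g ≥ 2`, the determinant of the `(g−1) × (g−1)` matrix over `ℛ_g` with
`(i,j)` entry `λ_{g−2i+j}` (for `1 ≤ i, j ≤ g−1`, with `λ_0 = 1` and `λ_m = 0`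
for `m < 0` or `m > g`) equals `λ_1 λ_2 ⋯ λ_{g−1}`. -/
theorem Rring_jacobiTrudi_det (g : ℕ) (hg : 2 ≤ g) :
    Matrix.det (Matrix.of fun i j : Fin (g - 1) =>
        Ideal.Quotient.mk (Rideal g)
          (lamZ g ((g : ℤ) - 2 * ((i : ℤ) + 1) + ((j : ℤ) + 1)))) =
      Ideal.Quotient.mk (Rideal g) (∏ j ∈ Finset.Icc 1 (g - 1), lam g j) := by
  obtain ⟨n, rfl⟩ : ∃ n, g = n + 2 := ⟨g - 2, by omega⟩
  exact JT.key n

end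
end

section
/- Let k ≥ 2 and let c := (1+ℓ)·∏_{i=2}^{k+1} (1+z_1+z_i) in the polynomial ring ℚ[z_1,…,z_{k+1},ℓ]. Then [c]_{k+1} − z_1·[c/(1+z_1)]_k − (z_2·⋯·z_{k+1})·[c/((1+z_2)⋯(1+z_{k+1}))]_1 = −(k+1)·z_1·z_2·⋯·z_{k+1}. -/
open MvPolynomial

/-- The truncated geometric series `Σ_{t=0}^{d} (−w)^t`, so that the degree-`d`
homogeneous component of `P * geom d w` is the degree-`d` component of the power
series expansion `P/(1+w)`. -/
noncomputable def geom {σ : Type*} (d : ℕ) (w : MvPolynomial σ ℚ) : MvPolynomial σ ℚ :=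
  ∑ t ∈ Finset.range (d + 1), (-w) ^ t

private lemma hc_of {σ : Type*} {p : MvPolynomial σ ℚ} {m n : ℕ}
    (h : p.IsHomogeneous n) :
    homogeneousComponent m p = if m = n then p else 0 :=
  homogeneousComponent_of_mem ((mem_homogeneousSubmodule _ _).2 h)

private lemma natCast_isHomogeneous {σ : Type*} (n : ℕ) :
    ((n : MvPolynomial σ ℚ)).IsHomogeneous 0 := by
  rw [← map_natCast (C : ℚ →+* MvPolynomial σ ℚ) n]
  exact isHomogeneous_C _ _

private lemma prod_add_pow {σ : Type*} (k : ℕ) (f : Fin k → MvPolynomial σ ℚ)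
    (y : MvPolynomial σ ℚ) :
    ∏ j : Fin k, (f j + y) =
      ∑ S ∈ (Finset.univ : Finset (Fin k)).powerset, (∏ j ∈ S, f j) * y ^ (k - S.card) := by
  rw [Finset.prod_add]
  refine Finset.sum_congr rfl fun S hS => ?_
  rw [Finset.prod_const, Finset.card_sdiff_of_subset (Finset.mem_powerset.1 hS), Finset.card_univ,
    Fintype.card_fin]

/-- **Excess contribution of a star tree (Remark after Example 5.3).**
For `k ≥ 2`, with `c = (1+ℓ)·∏_{i=2}^{k+1}(1+z_1+z_i)` in `ℚ[z_1,…,z_{k+1},ℓ]`,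
one has
`[c]_{k+1} − z_1·[c/(1+z_1)]_k − (z_2⋯z_{k+1})·[c/((1+z_2)⋯(1+z_{k+1}))]_1
  = −(k+1)·z_1 z_2 ⋯ z_{k+1}`. -/
theorem excess_contribution_star (k : ℕ) (hk : 2 ≤ k) :
    let z : Fin (k + 1) → MvPolynomial (Fin (k + 2)) ℚ := fun i => X i.castSucc
    let ℓ : MvPolynomial (Fin (k + 2)) ℚ := X (Fin.last (k + 1))
    let c : MvPolynomial (Fin (k + 2)) ℚ := (1 + ℓ) * ∏ j : Fin k, (1 + z 0 + z j.succ)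
    homogeneousComponent (k + 1) c
        - z 0 * homogeneousComponent k (c * geom k (z 0))
        - (∏ j : Fin k, z j.succ) *
            homogeneousComponent 1 (c * ∏ j : Fin k, geom 1 (z j.succ))
      = -((k : MvPolynomial (Fin (k + 2)) ℚ) + 1) * ∏ i : Fin (k + 1), z i := by
  intro z ℓ c
  classical
  -- basic homogeneity facts
  have hx1 : (z 0).IsHomogeneous 1 := isHomogeneous_X _ _
  have hl1 : ℓ.IsHomogeneous 1 := isHomogeneous_X _ _
  have hw1 : ∀ j : Fin k, (z j.succ).IsHomogeneous 1 := fun j => isHomogeneous_X _ _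
  set Q : Finset (Fin k) → MvPolynomial (Fin (k + 2)) ℚ :=
    fun S => ∏ j ∈ S, (z 0 + z j.succ) with hQdef
  have hQh : ∀ S : Finset (Fin k), (Q S).IsHomogeneous S.card := by
    intro S
    have := MvPolynomial.IsHomogeneous.prod S (fun j => z 0 + z j.succ) (fun _ => 1)
      (fun j _ => hx1.add (hw1 j))
    simpa using this
  have hxp : ∀ t : ℕ, ((-(z 0)) ^ t).IsHomogeneous t := fun t => by
    simpa using (hx1.neg).pow t
  have hcard : ∀ S ∈ (Finset.univ : Finset (Fin k)).powerset, S.card ≤ k := fun S _ => by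
    simpa using Finset.card_le_univ S
  have hcard_univ : (Finset.univ : Finset (Fin k)).card = k := by
    rw [Finset.card_univ, Fintype.card_fin]
  -- key expansion identity
  have key : ∀ y : MvPolynomial (Fin (k + 2)) ℚ,
      (∏ j : Fin k, (z 0 + z j.succ + y)) =
        ∑ S ∈ (Finset.univ : Finset (Fin k)).powerset, Q S * y ^ (k - S.card) := fun y =>
    prod_add_pow k (fun j => z 0 + z j.succ) y
  have keyP : (∏ j : Fin k, (1 + z 0 + z j.succ)) = ∑ S ∈ (Finset.univ : Finset (Fin k)).powerset, Q S := by
    have h1 := key 1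
    simp only [one_pow, mul_one] at h1
    rw [← h1]
    exact Finset.prod_congr rfl fun j _ => by ring
  have keyW : ∑ S ∈ (Finset.univ : Finset (Fin k)).powerset, Q S * (-(z 0)) ^ (k - S.card)
      = ∏ j : Fin k, z j.succ := by
    rw [← key (-(z 0))]
    exact Finset.prod_congr rfl fun j _ => by ring
  have hc : c = (∑ S ∈ (Finset.univ : Finset (Fin k)).powerset, Q S)
      + ∑ S ∈ (Finset.univ : Finset (Fin k)).powerset, ℓ * Q S := by
    show (1 + ℓ) * (∏ j : Fin k, (1 + z 0 + z j.succ)) = _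
    rw [keyP, ← Finset.mul_sum]
    ring
  -- value of term 1
  have val1 : homogeneousComponent (k + 1) c = ℓ * Q Finset.univ := by
    rw [hc, map_add, map_sum, map_sum]
    have e1 : ∑ S ∈ (Finset.univ : Finset (Fin k)).powerset, homogeneousComponent (k + 1) (Q S) = 0 := by
      refine Finset.sum_eq_zero fun S hS => ?_
      rw [hc_of (hQh S), if_neg (by have := hcard S hS; omega)]
    have e2 : ∑ S ∈ (Finset.univ : Finset (Fin k)).powerset, homogeneousComponent (k + 1) (ℓ * Q S)
        = ℓ * Q Finset.univ := by
      have e2' : ∀ S ∈ (Finset.univ : Finset (Fin k)).powerset,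
          homogeneousComponent (k + 1) (ℓ * Q S)
            = if S = Finset.univ then ℓ * Q S else 0 := by
        intro S hS
        rw [hc_of (hl1.mul (hQh S))]
        by_cases h : S = Finset.univ
        · subst h
          rw [hcard_univ, if_pos rfl, if_pos (by omega)]
        · have hne : ¬(k + 1 = 1 + S.card) := fun hcon =>
            h ((Finset.card_eq_iff_eq_univ S).1 (by rw [Fintype.card_fin]; omega))
          rw [if_neg h, if_neg hne]
      rw [Finset.sum_congr rfl e2',
        Finset.sum_ite_eq' _ (Finset.univ : Finset (Fin k)) (fun S => ℓ * Q S),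
        if_pos (Finset.mem_powerset_self _)]
    rw [e1, e2, zero_add]
  -- value of term 2
  have expand2 : c * geom k (z 0) =
      (∑ S ∈ (Finset.univ : Finset (Fin k)).powerset, ∑ t ∈ Finset.range (k + 1), Q S * (-(z 0)) ^ t)
        + ∑ S ∈ (Finset.univ : Finset (Fin k)).powerset, ∑ t ∈ Finset.range (k + 1),
            ℓ * (Q S * (-(z 0)) ^ t) := by
    have hg : geom k (z 0) = ∑ t ∈ Finset.range (k + 1), (-(z 0)) ^ t := rfl
    rw [hc, hg, add_mul, Finset.sum_mul_sum, Finset.sum_mul_sum]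
    congr 1
    exact Finset.sum_congr rfl fun S _ => Finset.sum_congr rfl fun t _ => by ring
  have val2 : homogeneousComponent k (c * geom k (z 0)) =
      (∏ j : Fin k, z j.succ)
        + ∑ S ∈ (Finset.univ : Finset (Fin k)).powerset,
            (if S = Finset.univ then 0 else ℓ * (Q S * (-(z 0)) ^ (k - 1 - S.card))) := by
    rw [expand2, map_add]
    simp only [map_sum]
    congr 1
    · -- first family
      have e1 : ∀ S ∈ (Finset.univ : Finset (Fin k)).powerset,
          (∑ t ∈ Finset.range (k + 1), homogeneousComponent k (Q S * (-(z 0)) ^ t))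
            = Q S * (-(z 0)) ^ (k - S.card) := by
        intro S hS
        have hSk := hcard S hS
        have e' : ∀ t ∈ Finset.range (k + 1),
            homogeneousComponent k (Q S * (-(z 0)) ^ t)
              = if t = k - S.card then Q S * (-(z 0)) ^ t else 0 := by
          intro t ht
          rw [hc_of ((hQh S).mul (hxp t))]
          congr 1
          exact propext (by omega)
        rw [Finset.sum_congr rfl e',
          Finset.sum_ite_eq' _ (k - S.card) (fun t => Q S * (-(z 0)) ^ t),
          if_pos (Finset.mem_range.2 (by omega))]
      calc ∑ S ∈ (Finset.univ : Finset (Fin k)).powerset, ∑ t ∈ Finset.range (k + 1),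
              homogeneousComponent k (Q S * (-(z 0)) ^ t)
          = ∑ S ∈ (Finset.univ : Finset (Fin k)).powerset, Q S * (-(z 0)) ^ (k - S.card) :=
            Finset.sum_congr rfl e1
        _ = ∏ j : Fin k, z j.succ := keyW
    · -- second family
      refine Finset.sum_congr rfl fun S hS => ?_
      have hSk := hcard S hS
      by_cases h : S = Finset.univ
      · subst h
        rw [if_pos rfl]
        refine Finset.sum_eq_zero fun t ht => ?_
        rw [hc_of (hl1.mul ((hQh Finset.univ).mul (hxp t)))]
        rw [if_neg]
        rw [hcard_univ]
        omega
      · rw [if_neg h]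
        have hlt : S.card < k := by
          rcases lt_or_eq_of_le hSk with h' | h'
          · exact h'
          · exact absurd ((Finset.card_eq_iff_eq_univ S).1
              (by rw [Fintype.card_fin]; exact h')) h
        have e' : ∀ t ∈ Finset.range (k + 1),
            homogeneousComponent k (ℓ * (Q S * (-(z 0)) ^ t))
              = if t = k - 1 - S.card then ℓ * (Q S * (-(z 0)) ^ t) else 0 := by
          intro t ht
          rw [hc_of (hl1.mul ((hQh S).mul (hxp t)))]
          congr 1
          exact propext (by omega)
        rw [Finset.sum_congr rfl e',
          Finset.sum_ite_eq' _ (k - 1 - S.card) (fun t => ℓ * (Q S * (-(z 0)) ^ t)),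
          if_pos (Finset.mem_range.2 (by omega))]
  have val2b : z 0 * (∑ S ∈ (Finset.univ : Finset (Fin k)).powerset,
        (if S = Finset.univ then 0 else ℓ * (Q S * (-(z 0)) ^ (k - 1 - S.card))))
      = ℓ * Q Finset.univ - ℓ * ∏ j : Fin k, z j.succ := by
    rw [Finset.mul_sum]
    have step : ∀ S ∈ (Finset.univ : Finset (Fin k)).powerset,
        z 0 * (if S = Finset.univ then 0
            else ℓ * (Q S * (-(z 0)) ^ (k - 1 - S.card)))
          = (if S = Finset.univ then ℓ * (Q S * (-(z 0)) ^ (k - S.card)) else 0)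
            - ℓ * (Q S * (-(z 0)) ^ (k - S.card)) := by
      intro S hS
      by_cases h : S = Finset.univ
      · rw [if_pos h, if_pos h]; ring
      · rw [if_neg h, if_neg h]
        have hlt : S.card < k := by
          rcases lt_or_eq_of_le (hcard S hS) with h' | h'
          · exact h'
          · exact absurd ((Finset.card_eq_iff_eq_univ S).1
              (by rw [Fintype.card_fin]; exact h')) h
        have hpow : (-(z 0)) ^ (k - S.card) = (-(z 0)) ^ (k - 1 - S.card) * (-(z 0)) := by
          rw [← pow_succ]
          congr 1
          omega
        rw [hpow]
        ring
    rw [Finset.sum_congr rfl step, Finset.sum_sub_distrib,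
      Finset.sum_ite_eq' _ (Finset.univ : Finset (Fin k))
        (fun S => ℓ * (Q S * (-(z 0)) ^ (k - S.card))),
      if_pos (Finset.mem_powerset_self _)]
    have : ∑ S ∈ (Finset.univ : Finset (Fin k)).powerset, ℓ * (Q S * (-(z 0)) ^ (k - S.card))
        = ℓ * ∏ j : Fin k, z j.succ := by
      rw [← Finset.mul_sum, keyW]
    rw [this, hcard_univ, Nat.sub_self, pow_zero, mul_one]
  -- value of term 3
  have hgeom1 : ∀ j : Fin k, geom 1 (z j.succ) = 1 - z j.succ := by
    intro j
    show ∑ t ∈ Finset.range 2, (-(z j.succ)) ^ t = _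
    rw [Finset.sum_range_succ, Finset.sum_range_one]
    ring
  have hH : ∀ S : Finset (Fin k),
      (∏ j ∈ S, -(z j.succ * (z 0 + z j.succ))).IsHomogeneous (S.card * 2) := by
    intro S
    have := MvPolynomial.IsHomogeneous.prod S
      (fun j => -(z j.succ * (z 0 + z j.succ))) (fun _ => 2)
      (fun j _ => ((hw1 j).mul (hx1.add (hw1 j))).neg)
    rwa [Finset.sum_const, smul_eq_mul] at this
  have hu : ∀ (m t : ℕ), ((z 0) ^ t * ((m.choose t : ℕ) : MvPolynomial (Fin (k + 2)) ℚ)).IsHomogeneous t := by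
    intro m t
    have := (isHomogeneous_X_pow (R := ℚ) ((0 : Fin (k + 1)).castSucc) t).mul
      (natCast_isHomogeneous (σ := Fin (k + 2)) (m.choose t))
    exact this
  have expand3 : c * ∏ j : Fin k, geom 1 (z j.succ)
      = (∑ S ∈ (Finset.univ : Finset (Fin k)).powerset, ∑ t ∈ Finset.range (k - S.card + 1),
          (∏ j ∈ S, -(z j.succ * (z 0 + z j.succ)))
            * ((z 0) ^ t * (((k - S.card).choose t : ℕ) : MvPolynomial (Fin (k + 2)) ℚ)))
        + ∑ S ∈ (Finset.univ : Finset (Fin k)).powerset, ∑ t ∈ Finset.range (k - S.card + 1),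
            ℓ * ((∏ j ∈ S, -(z j.succ * (z 0 + z j.succ)))
              * ((z 0) ^ t * (((k - S.card).choose t : ℕ) : MvPolynomial (Fin (k + 2)) ℚ))) := by
    have h1 : c * ∏ j : Fin k, geom 1 (z j.succ)
        = (1 + ℓ) * ∏ j : Fin k, (-(z j.succ * (z 0 + z j.succ)) + (1 + z 0)) := by
      have hcc : c = (1 + ℓ) * ∏ j : Fin k, (1 + z 0 + z j.succ) := rfl
      rw [hcc, mul_assoc, ← Finset.prod_mul_distrib]
      congr 1
      refine Finset.prod_congr rfl fun j _ => ?_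
      rw [hgeom1 j]
      ring
    have h2 : ∏ j : Fin k, (-(z j.succ * (z 0 + z j.succ)) + (1 + z 0))
        = ∑ S ∈ (Finset.univ : Finset (Fin k)).powerset,
            (∏ j ∈ S, -(z j.succ * (z 0 + z j.succ)))
              * ∑ t ∈ Finset.range (k - S.card + 1),
                  (z 0) ^ t * (((k - S.card).choose t : ℕ) : MvPolynomial (Fin (k + 2)) ℚ) := by
      rw [prod_add_pow k (fun j => -(z j.succ * (z 0 + z j.succ))) (1 + z 0)]
      refine Finset.sum_congr rfl fun S hS => ?_
      congr 1
      rw [add_comm (1 : MvPolynomial (Fin (k + 2)) ℚ) (z 0), add_pow]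
      refine Finset.sum_congr rfl fun t ht => ?_
      rw [one_pow, mul_one]
    rw [h1, h2, one_add_mul]
    congr 1
    · exact Finset.sum_congr rfl fun S _ => Finset.mul_sum _ _ _
    · rw [Finset.mul_sum]
      refine Finset.sum_congr rfl fun S _ => ?_
      rw [Finset.mul_sum, Finset.mul_sum]
  have val3 : homogeneousComponent 1 (c * ∏ j : Fin k, geom 1 (z j.succ))
      = (k : MvPolynomial (Fin (k + 2)) ℚ) * z 0 + ℓ := by
    rw [expand3, map_add]
    simp only [map_sum]
    have deg1 : ∀ (S : Finset (Fin k)) (t : ℕ),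
        ((∏ j ∈ S, -(z j.succ * (z 0 + z j.succ)))
          * ((z 0) ^ t * (((k - S.card).choose t : ℕ) : MvPolynomial (Fin (k + 2)) ℚ))).IsHomogeneous
            (S.card * 2 + t) := fun S t => (hH S).mul (hu (k - S.card) t)
    have e1 : ∑ S ∈ (Finset.univ : Finset (Fin k)).powerset, ∑ t ∈ Finset.range (k - S.card + 1),
        homogeneousComponent 1
          ((∏ j ∈ S, -(z j.succ * (z 0 + z j.succ)))
            * ((z 0) ^ t * (((k - S.card).choose t : ℕ) : MvPolynomial (Fin (k + 2)) ℚ)))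
        = (k : MvPolynomial (Fin (k + 2)) ℚ) * z 0 := by
      rw [Finset.sum_eq_single_of_mem (∅ : Finset (Fin k))
        (Finset.empty_mem_powerset _)]
      · have e' : ∀ t ∈ Finset.range (k - (∅ : Finset (Fin k)).card + 1),
            homogeneousComponent 1
              ((∏ j ∈ (∅ : Finset (Fin k)), -(z j.succ * (z 0 + z j.succ)))
                * ((z 0) ^ t
                  * (((k - (∅ : Finset (Fin k)).card).choose t : ℕ) : MvPolynomial (Fin (k + 2)) ℚ)))
              = if t = 1 then
                  (∏ j ∈ (∅ : Finset (Fin k)), -(z j.succ * (z 0 + z j.succ)))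
                    * ((z 0) ^ t
                      * (((k - (∅ : Finset (Fin k)).card).choose t : ℕ) : MvPolynomial (Fin (k + 2)) ℚ))
                else 0 := by
          intro t ht
          rw [hc_of (deg1 ∅ t)]
          congr 1
          simp only [Finset.card_empty]
          exact propext (by omega)
        rw [Finset.sum_congr rfl e', Finset.sum_ite_eq' _ 1 _,
          if_pos (Finset.mem_range.2 (by simp [Finset.card_empty]; omega))]
        simp [Nat.choose_one_right, mul_comm]
      · intro S hS hne
        refine Finset.sum_eq_zero fun t ht => ?_
        rw [hc_of (deg1 S t), if_neg]
        have : 1 ≤ S.card := Finset.card_pos.2 (Finset.nonempty_iff_ne_empty.2 hne)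
        omega
    have e2 : ∑ S ∈ (Finset.univ : Finset (Fin k)).powerset, ∑ t ∈ Finset.range (k - S.card + 1),
        homogeneousComponent 1
          (ℓ * ((∏ j ∈ S, -(z j.succ * (z 0 + z j.succ)))
            * ((z 0) ^ t * (((k - S.card).choose t : ℕ) : MvPolynomial (Fin (k + 2)) ℚ))))
        = ℓ := by
      rw [Finset.sum_eq_single_of_mem (∅ : Finset (Fin k))
        (Finset.empty_mem_powerset _)]
      · have e' : ∀ t ∈ Finset.range (k - (∅ : Finset (Fin k)).card + 1),
            homogeneousComponent 1
              (ℓ * ((∏ j ∈ (∅ : Finset (Fin k)), -(z j.succ * (z 0 + z j.succ)))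
                * ((z 0) ^ t
                  * (((k - (∅ : Finset (Fin k)).card).choose t : ℕ) : MvPolynomial (Fin (k + 2)) ℚ))))
              = if t = 0 then
                  ℓ * ((∏ j ∈ (∅ : Finset (Fin k)), -(z j.succ * (z 0 + z j.succ)))
                    * ((z 0) ^ t
                      * (((k - (∅ : Finset (Fin k)).card).choose t : ℕ) : MvPolynomial (Fin (k + 2)) ℚ)))
                else 0 := by
          intro t ht
          rw [hc_of (hl1.mul (deg1 ∅ t))]
          congr 1
          simp only [Finset.card_empty]
          exact propext (by omega)
        rw [Finset.sum_congr rfl e', Finset.sum_ite_eq' _ 0 _,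
          if_pos (Finset.mem_range.2 (by omega))]
        simp
      · intro S hS hne
        refine Finset.sum_eq_zero fun t ht => ?_
        rw [hc_of (hl1.mul (deg1 S t)), if_neg]
        have : 1 ≤ S.card := Finset.card_pos.2 (Finset.nonempty_iff_ne_empty.2 hne)
        omega
    rw [e1, e2]
  -- final assembly
  rw [val1, val2, val3, mul_add, val2b, Fin.prod_univ_succ]
  ring
end

section
/- In ℚ[z_1,z_2,z_3,z_4,ℓ_1,ℓ_2] let c := (1+z_2)(1+z_1+z_3)(1+z_1+z_4)(1+ℓ_1)(1+ℓ_2). Then [c]_5 − z_1z_2·[c/((1+z_1)(1+z_2))]_3 − z_2z_3z_4·[c/((1+z_2)(1+z_3)(1+z_4))]_2 = z_1z_2z_3z_4·( −3·[c]_1 + 6z_1 + 3z_2 + 4(z_3+z_4) ). -/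
open MvPolynomial

private lemma hc_mul_zero {σ : Type*} {p : MvPolynomial σ ℚ} {k : ℕ}
    (hp : p.IsHomogeneous k) (q : MvPolynomial σ ℚ) (n : ℕ) (h : n < k) :
    homogeneousComponent n (p * q) = 0 := by
  conv_lhs => rw [← sum_homogeneousComponent q]
  rw [Finset.mul_sum, map_sum]
  refine Finset.sum_eq_zero fun i _ => ?_
  rw [homogeneousComponent_of_mem (hp.mul (homogeneousComponent_isHomogeneous i q)), if_neg (by omega)]

private lemma hc_mul {σ : Type*} {p : MvPolynomial σ ℚ} {k : ℕ}
    (hp : p.IsHomogeneous k) (q : MvPolynomial σ ℚ) (m n : ℕ) (h : k + m = n) :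
    homogeneousComponent n (p * q) = p * homogeneousComponent m q := by
  subst h
  conv_lhs => rw [← sum_homogeneousComponent q]
  rw [Finset.mul_sum, map_sum]
  by_cases hm : m ≤ q.totalDegree
  · rw [Finset.sum_eq_single m (fun i _ hi => by
        rw [homogeneousComponent_of_mem (hp.mul (homogeneousComponent_isHomogeneous i q)),
          if_neg (by omega)])
      (fun hm' => absurd (Finset.mem_range.mpr (by omega)) hm')]
    rw [homogeneousComponent_of_mem (hp.mul (homogeneousComponent_isHomogeneous m q)), if_pos rfl]
  · rw [homogeneousComponent_eq_zero m q (by omega), mul_zero]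
    refine Finset.sum_eq_zero fun i hi => ?_
    rw [homogeneousComponent_of_mem (hp.mul (homogeneousComponent_isHomogeneous i q)), if_neg]
    have := Finset.mem_range.mp hi
    omega

set_option maxHeartbeats 1000000 in
/-- **Example 5.4: excess contribution for g = 6, leaf at the root.**
In `ℚ[z_1,z_2,z_3,z_4,ℓ_1,ℓ_2]` with
`c = (1+z_2)(1+z_1+z_3)(1+z_1+z_4)(1+ℓ_1)(1+ℓ_2)`:
`[c]_5 − z_1 z_2·[c/((1+z_1)(1+z_2))]_3 − z_2 z_3 z_4·[c/((1+z_2)(1+z_3)(1+z_4))]_2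
  = z_1 z_2 z_3 z_4·(−3[c]_1 + 6z_1 + 3z_2 + 4(z_3+z_4))`. -/
theorem excess_contribution_g6_mixed :
    let z1 : MvPolynomial (Fin 6) ℚ := X 0
    let z2 : MvPolynomial (Fin 6) ℚ := X 1
    let z3 : MvPolynomial (Fin 6) ℚ := X 2
    let z4 : MvPolynomial (Fin 6) ℚ := X 3
    let l1 : MvPolynomial (Fin 6) ℚ := X 4
    let l2 : MvPolynomial (Fin 6) ℚ := X 5
    let c := (1 + z2) * (1 + z1 + z3) * (1 + z1 + z4) * (1 + l1) * (1 + l2)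
    homogeneousComponent 5 c
        - z1 * z2 * homogeneousComponent 3 (c * geom 3 z1 * geom 3 z2)
        - z2 * z3 * z4 * homogeneousComponent 2 (c * geom 2 z2 * geom 2 z3 * geom 2 z4)
      = z1 * z2 * z3 * z4 *
          (-3 * homogeneousComponent 1 c + 6 * z1 + 3 * z2 + 4 * (z3 + z4)) := by
  intro z1 z2 z3 z4 l1 l2 c
  show homogeneousComponent 5 (((1 + X 1) * (1 + X 0 + X 2) * (1 + X 0 + X 3) * (1 + X 4) * (1 + X 5)) : MvPolynomial (Fin 6) ℚ) - X 0 * X 1 * homogeneousComponent 3 (((1 + X 1) * (1 + X 0 + X 2) * (1 + X 0 + X 3) * (1 + X 4) * (1 + X 5) * geom 3 (X 0) * geom 3 (X 1)) : MvPolynomial (Fin 6) ℚ) - X 1 * X 2 * X 3 * homogeneousComponent 2 (((1 + X 1) * (1 + X 0 + X 2) * (1 + X 0 + X 3) * (1 + X 4) * (1 + X 5) * geom 2 (X 1) * geom 2 (X 2) * geom 2 (X 3)) : MvPolynomial (Fin 6) ℚ) = X 0 * X 1 * X 2 * X 3 * (-3 * homogeneousComponent 1 (((1 + X 1) * (1 +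 X 0 + X 2) * (1 + X 0 + X 3) * (1 + X 4) * (1 + X 5)) : MvPolynomial (Fin 6) ℚ) + 6 * X 0 + 3 * X 1 + 4 * (X 2 + X 3))
  have pU0 : ((1) : MvPolynomial (Fin 6) ℚ).IsHomogeneous 0 := (isHomogeneous_one _ _)
  have pU1 : ((X 0 + X 0 + X 2 + X 3 + X 4 + X 5) : MvPolynomial (Fin 6) ℚ).IsHomogeneous 1 := ((((((isHomogeneous_X _ _).add (isHomogeneous_X _ _)).add (isHomogeneous_X _ _)).add (isHomogeneous_X _ _)).add (isHomogeneous_X _ _)).add (isHomogeneous_X _ _))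
  have pU2 : ((X 0 * X 0 + X 0 * X 2 + X 0 * X 3 + X 0 * X 4 + X 0 * X 4 + X 0 * X 5 + X 0 * X 5 + X 2 * X 3 + X 2 * X 4 + X 2 * X 5 + X 3 * X 4 + X 3 * X 5 + X 4 * X 5) : MvPolynomial (Fin 6) ℚ).IsHomogeneous 2 := ((((((((((((((isHomogeneous_X _ _).mul (isHomogeneous_X _ _)).add ((isHomogeneous_X _ _).mul (isHomogeneous_X _ _))).add ((isHomogeneous_X _ _).mul (isHomogeneous_X _ _))).add ((isHomogeneous_X _ _).mul (isHomogeneous_X _ _))).add ((isHomogeneous_X _ _).mul (isHomogeneous_X _ _))).add ((isHomogeneous_X _ _).mul (isHomogeneous_X _ _))).add ((isHomogeneous_X _ _).mul (isHomogeneous_X _ _))).add ((isHomogeneous_X _ _).mul (isHomogeneous_X _ _))).add ((isHomogeneous_X _ _).mul (isHomogeneous_X _ _))).add ((isHomogeneous_X _ _).mul (isHomogeneous_X _ _))).add ((isHomogeneous_X _ _).mul (isHomogeneous_X _ _))).add ((isHomogeneous_X _ _).mul (isHomogeneous_X _ _))).add ((isHomogeneous_X _ _).mul (isHomogeneous_X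 _ _)))
  have pU3 : ((X 0 * X 0 * X 4 + X 0 * X 0 * X 5 + X 0 * X 2 * X 4 + X 0 * X 2 * X 5 + X 0 * X 3 * X 4 + X 0 * X 3 * X 5 + X 0 * X 4 * X 5 + X 0 * X 4 * X 5 + X 2 * X 3 * X 4 + X 2 * X 3 * X 5 + X 2 * X 4 * X 5 + X 3 * X 4 * X 5) : MvPolynomial (Fin 6) ℚ).IsHomogeneous 3 := ((((((((((((((isHomogeneous_X _ _).mul (isHomogeneous_X _ _)).mul (isHomogeneous_X _ _)).add (((isHomogeneous_X _ _).mul (isHomogeneous_X _ _)).mul (isHomogeneous_X _ _))).add (((isHomogeneous_X _ _).mul (isHomogeneous_X _ _)).mul (isHomogeneous_X _ _))).add (((isHomogeneous_X _ _).mul (isHomogeneous_X _ _)).mul (isHomogeneous_X _ _))).add (((isHomogeneous_X _ _).mul (isHomogeneous_X _ _)).mul (isHomogeneous_X _ _))).add (((isHomogeneous_X _ _).mul (isHomogeneous_X _ _)).mul (isHomogeneous_X _ _))).add (((isHomogeneous_X _ _).mul (isHomogeneous_X _ _)).mul (isHomogeneous_X _ _))).add (((isHomogeneous_X _ _).mul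 (isHomogeneous_X _ _)).mul (isHomogeneous_X _ _))).add (((isHomogeneous_X _ _).mul (isHomogeneous_X _ _)).mul (isHomogeneous_X _ _))).add (((isHomogeneous_X _ _).mul (isHomogeneous_X _ _)).mul (isHomogeneous_X _ _))).add (((isHomogeneous_X _ _).mul (isHomogeneous_X _ _)).mul (isHomogeneous_X _ _))).add (((isHomogeneous_X _ _).mul (isHomogeneous_X _ _)).mul (isHomogeneous_X _ _)))
  have pU4 : ((X 0 * X 0 * X 4 * X 5 + X 0 * X 2 * X 4 * X 5 + X 0 * X 3 * X 4 * X 5 + X 2 * X 3 * X 4 * X 5) : MvPolynomial (Fin 6) ℚ).IsHomogeneous 4 := (((((((isHomogeneous_X _ _).mul (isHomogeneous_X _ _)).mul (isHomogeneous_X _ _)).mul (isHomogeneous_X _ _)).add ((((isHomogeneous_X _ _).mul (isHomogeneous_X _ _)).mul (isHomogeneous_X _ _)).mul (isHomogeneous_X _ _))).add ((((isHomogeneous_X _ _).mul (isHomogeneous_X _ _)).mul (isHomogeneous_X _ _)).mul (isHomogeneous_X _ _))).add ((((isHomogeneous_X _ _).mul (isHomogeneous_X _ _)).mul (isHomogeneous_X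 _ _)).mul (isHomogeneous_X _ _)))
  have eU : (((1 + X 0 + X 2) * (1 + X 0 + X 3) * (1 + X 4) * (1 + X 5)) : MvPolynomial (Fin 6) ℚ) = (1) + (X 0 + X 0 + X 2 + X 3 + X 4 + X 5) + (X 0 * X 0 + X 0 * X 2 + X 0 * X 3 + X 0 * X 4 + X 0 * X 4 + X 0 * X 5 + X 0 * X 5 + X 2 * X 3 + X 2 * X 4 + X 2 * X 5 + X 3 * X 4 + X 3 * X 5 + X 4 * X 5) + (X 0 * X 0 * X 4 + X 0 * X 0 * X 5 + X 0 * X 2 * X 4 + X 0 * X 2 * X 5 + X 0 * X 3 * X 4 + X 0 * X 3 * X 5 + X 0 * X 4 * X 5 + X 0 * X 4 * X 5 + X 2 * X 3 * X 4 + X 2 * X 3 * X 5 + X 2 * X 4 * X 5 + X 3 * X 4 * X 5) + (X 0 * X 0 * X 4 * X 5 + X 0 * X 2 * X 4 * X 5 + X 0 * X 3 * X 4 * X 5 + X 2 * X 3 * X 4 * X 5) := by ring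
  have hU0 : homogeneousComponent 0 (((1 + X 0 + X 2) * (1 + X 0 + X 3) * (1 + X 4) * (1 + X 5)) : MvPolynomial (Fin 6) ℚ) = (1 : MvPolynomial (Fin 6) ℚ) := by
    rw [eU, map_add, map_add, map_add, map_add, homogeneousComponent_of_mem pU0, homogeneousComponent_of_mem pU1, homogeneousComponent_of_mem pU2, homogeneousComponent_of_mem pU3, homogeneousComponent_of_mem pU4]
    norm_num
    try ring
  have hU1 : homogeneousComponent 1 (((1 + X 0 + X 2) * (1 + X 0 + X 3) * (1 + X 4) * (1 + X 5)) : MvPolynomial (Fin 6) ℚ) = 2 * X 0 + X 2 + X 3 + X 4 + X 5 := by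
    rw [eU, map_add, map_add, map_add, map_add, homogeneousComponent_of_mem pU0, homogeneousComponent_of_mem pU1, homogeneousComponent_of_mem pU2, homogeneousComponent_of_mem pU3, homogeneousComponent_of_mem pU4]
    norm_num
    try ring
  have hU2 : homogeneousComponent 2 (((1 + X 0 + X 2) * (1 + X 0 + X 3) * (1 + X 4) * (1 + X 5)) : MvPolynomial (Fin 6) ℚ) = X 0 * X 0 + X 0 * X 2 + X 0 * X 3 + 2 * X 0 * X 4 + 2 * X 0 * X 5 + X 2 * X 3 + X 2 * X 4 + X 2 * X 5 + X 3 * X 4 + X 3 * X 5 + X 4 * X 5 := by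
    rw [eU, map_add, map_add, map_add, map_add, homogeneousComponent_of_mem pU0, homogeneousComponent_of_mem pU1, homogeneousComponent_of_mem pU2, homogeneousComponent_of_mem pU3, homogeneousComponent_of_mem pU4]
    norm_num
    try ring
  have hU3 : homogeneousComponent 3 (((1 + X 0 + X 2) * (1 + X 0 + X 3) * (1 + X 4) * (1 + X 5)) : MvPolynomial (Fin 6) ℚ) = X 0 * X 0 * X 4 + X 0 * X 0 * X 5 + X 0 * X 2 * X 4 + X 0 * X 2 * X 5 + X 0 * X 3 * X 4 + X 0 * X 3 * X 5 + 2 * X 0 * X 4 * X 5 + X 2 * X 3 * X 4 + X 2 * X 3 * X 5 + X 2 * X 4 * X 5 + X 3 * X 4 * X 5 := by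
    rw [eU, map_add, map_add, map_add, map_add, homogeneousComponent_of_mem pU0, homogeneousComponent_of_mem pU1, homogeneousComponent_of_mem pU2, homogeneousComponent_of_mem pU3, homogeneousComponent_of_mem pU4]
    norm_num
    try ring
  have hU4 : homogeneousComponent 4 (((1 + X 0 + X 2) * (1 + X 0 + X 3) * (1 + X 4) * (1 + X 5)) : MvPolynomial (Fin 6) ℚ) = X 0 * X 0 * X 4 * X 5 + X 0 * X 2 * X 4 * X 5 + X 0 * X 3 * X 4 * X 5 + X 2 * X 3 * X 4 * X 5 := by
    rw [eU, map_add, map_add, map_add, map_add, homogeneousComponent_of_mem pU0, homogeneousComponent_of_mem pU1, homogeneousComponent_of_mem pU2, homogeneousComponent_of_mem pU3, homogeneousComponent_of_mem pU4]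
    norm_num
    try ring
  have hU5 : homogeneousComponent 5 (((1 + X 0 + X 2) * (1 + X 0 + X 3) * (1 + X 4) * (1 + X 5)) : MvPolynomial (Fin 6) ℚ) = 0 := by
    rw [eU, map_add, map_add, map_add, map_add, homogeneousComponent_of_mem pU0, homogeneousComponent_of_mem pU1, homogeneousComponent_of_mem pU2, homogeneousComponent_of_mem pU3, homogeneousComponent_of_mem pU4]
    norm_num
    try ring
  have pX0 : ((X 0) : MvPolynomial (Fin 6) ℚ).IsHomogeneous 1 := isHomogeneous_X _ _
  have pX1 : ((X 1) : MvPolynomial (Fin 6) ℚ).IsHomogeneous 1 := isHomogeneous_X _ _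
  have pX2 : ((X 2) : MvPolynomial (Fin 6) ℚ).IsHomogeneous 1 := isHomogeneous_X _ _
  have pX3 : ((X 3) : MvPolynomial (Fin 6) ℚ).IsHomogeneous 1 := isHomogeneous_X _ _
  have pX04 : ((X 0 * X 0 * X 0 * X 0) : MvPolynomial (Fin 6) ℚ).IsHomogeneous 4 := (((pX0.mul pX0).mul pX0).mul pX0)
  have pX14 : ((X 1 * X 1 * X 1 * X 1) : MvPolynomial (Fin 6) ℚ).IsHomogeneous 4 := (((pX1.mul pX1).mul pX1).mul pX1)
  have pX13 : ((X 1 * X 1 * X 1) : MvPolynomial (Fin 6) ℚ).IsHomogeneous 3 := ((pX1.mul pX1).mul pX1)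
  have pX23 : ((X 2 * X 2 * X 2) : MvPolynomial (Fin 6) ℚ).IsHomogeneous 3 := ((pX2.mul pX2).mul pX2)
  have pX33 : ((X 3 * X 3 * X 3) : MvPolynomial (Fin 6) ℚ).IsHomogeneous 3 := ((pX3.mul pX3).mul pX3)
  have pX2333 : ((X 2 * X 2 * X 2 * X 3 * X 3 * X 3) : MvPolynomial (Fin 6) ℚ).IsHomogeneous 6 := (((((pX2.mul pX2).mul pX2).mul pX3).mul pX3).mul pX3)
  have pX23' : ((X 2 * X 3) : MvPolynomial (Fin 6) ℚ).IsHomogeneous 2 := (pX2.mul pX3)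
  have eV : (((1 + X 0 + X 2) * (1 + X 0 + X 3) * (1 + X 4) * (1 + X 5) * geom 3 (X 0)) : MvPolynomial (Fin 6) ℚ) = ((1 + X 0 + X 2) * (1 + X 0 + X 3) * (1 + X 4) * (1 + X 5)) + (-(X 0 * X 0 * X 0 * X 0 * ((1 + X 0 + X 2) * (1 + X 0 + X 3) * (1 + X 4) * (1 + X 5)))) + (-(X 0 * ((1 + X 0 + X 2) * (1 + X 0 + X 3) * (1 + X 4) * (1 + X 5) * geom 3 (X 0)))) := by
    simp only [geom, Finset.sum_range_succ, Finset.sum_range_zero]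
    ring
  have hV0 : homogeneousComponent 0 (((1 + X 0 + X 2) * (1 + X 0 + X 3) * (1 + X 4) * (1 + X 5) * geom 3 (X 0)) : MvPolynomial (Fin 6) ℚ) = (1 : MvPolynomial (Fin 6) ℚ) := by
    rw [eV, map_add, map_add, map_neg, map_neg, hU0, hc_mul_zero pX04 _ 0 (by norm_num), hc_mul_zero pX0 _ 0 (by norm_num)]
    ring
  have hV1 : homogeneousComponent 1 (((1 + X 0 + X 2) * (1 + X 0 + X 3) * (1 + X 4) * (1 + X 5) * geom 3 (X 0)) : MvPolynomial (Fin 6) ℚ) = X 0 + X 2 + X 3 + X 4 + X 5 := by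
    rw [eV, map_add, map_add, map_neg, map_neg, hU1, hc_mul_zero pX04 _ 1 (by norm_num), hc_mul pX0 _ 0 1 (by norm_num), hV0]
    ring
  have hV2 : homogeneousComponent 2 (((1 + X 0 + X 2) * (1 + X 0 + X 3) * (1 + X 4) * (1 + X 5) * geom 3 (X 0)) : MvPolynomial (Fin 6) ℚ) = X 0 * X 4 + X 0 * X 5 + X 2 * X 3 + X 2 * X 4 + X 2 * X 5 + X 3 * X 4 + X 3 * X 5 + X 4 * X 5 := by
    rw [eV, map_add, map_add, map_neg, map_neg, hU2, hc_mul_zero pX04 _ 2 (by norm_num), hc_mul pX0 _ 1 2 (by norm_num), hV1]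
    ring
  have hV3 : homogeneousComponent 3 (((1 + X 0 + X 2) * (1 + X 0 + X 3) * (1 + X 4) * (1 + X 5) * geom 3 (X 0)) : MvPolynomial (Fin 6) ℚ) = -X 0 * X 2 * X 3 + X 0 * X 4 * X 5 + X 2 * X 3 * X 4 + X 2 * X 3 * X 5 + X 2 * X 4 * X 5 + X 3 * X 4 * X 5 := by
    rw [eV, map_add, map_add, map_neg, map_neg, hU3, hc_mul_zero pX04 _ 3 (by norm_num), hc_mul pX0 _ 2 3 (by norm_num), hV2]
    ring
  have eW : (((1 + X 0 + X 2) * (1 + X 0 + X 3) * (1 + X 4) * (1 + X 5) * geom 2 (X 2) * geom 2 (X 3)) : MvPolynomial (Fin 6) ℚ) = ((1 + X 0 + X 2) * (1 + X 0 + X 3) * (1 + X 4) * (1 + X 5)) + X 2 * X 2 * X 2 * ((1 + X 0 + X 2) * (1 + X 0 + X 3) * (1 + X 4) * (1 + X 5)) + X 3 * X 3 * X 3 * ((1 + X 0 + X 2) * (1 + X 0 + X 3) * (1 + X 4) * (1 + X 5)) + X 2 * X 2 * X 2 * X 3 * X 3 * X 3 * ((1 + X 0 + X 2) * (1 + X 0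 + X 3) * (1 + X 4) * (1 + X 5)) + (-(X 2 * ((1 + X 0 + X 2) * (1 + X 0 + X 3) * (1 + X 4) * (1 + X 5) * geom 2 (X 2) * geom 2 (X 3)))) + (-(X 3 * ((1 + X 0 + X 2) * (1 + X 0 + X 3) * (1 + X 4) * (1 + X 5) * geom 2 (X 2) * geom 2 (X 3)))) + (-(X 2 * X 3 * ((1 + X 0 + X 2) * (1 + X 0 + X 3) * (1 + X 4) * (1 + X 5) * geom 2 (X 2) * geom 2 (X 3)))) := by
    simp only [geom, Finset.sum_range_succ, Finset.sum_range_zero]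
    ring
  have hW0 : homogeneousComponent 0 (((1 + X 0 + X 2) * (1 + X 0 + X 3) * (1 + X 4) * (1 + X 5) * geom 2 (X 2) * geom 2 (X 3)) : MvPolynomial (Fin 6) ℚ) = (1 : MvPolynomial (Fin 6) ℚ) := by
    rw [eW, map_add, map_add, map_add, map_add, map_add, map_add, map_neg, map_neg, map_neg, hU0, hc_mul_zero pX23 _ 0 (by norm_num), hc_mul_zero pX33 _ 0 (by norm_num), hc_mul_zero pX2333 _ 0 (by norm_num), hc_mul_zero pX2 _ 0 (by norm_num), hc_mul_zero pX3 _ 0 (by norm_num), hc_mul_zero pX23' _ 0 (by norm_num)]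
    ring
  have hW1 : homogeneousComponent 1 (((1 + X 0 + X 2) * (1 + X 0 + X 3) * (1 + X 4) * (1 + X 5) * geom 2 (X 2) * geom 2 (X 3)) : MvPolynomial (Fin 6) ℚ) = 2 * X 0 + X 4 + X 5 := by
    rw [eW, map_add, map_add, map_add, map_add, map_add, map_add, map_neg, map_neg, map_neg, hU1, hc_mul_zero pX23 _ 1 (by norm_num), hc_mul_zero pX33 _ 1 (by norm_num), hc_mul_zero pX2333 _ 1 (by norm_num), hc_mul pX2 _ 0 1 (by norm_num), hc_mul pX3 _ 0 1 (by norm_num), hc_mul_zero pX23' _ 1 (by norm_num), hW0]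
    ring
  have hW2 : homogeneousComponent 2 (((1 + X 0 + X 2) * (1 + X 0 + X 3) * (1 + X 4) * (1 + X 5) * geom 2 (X 2) * geom 2 (X 3)) : MvPolynomial (Fin 6) ℚ) = X 0 * X 0 - X 0 * X 2 - X 0 * X 3 + 2 * X 0 * X 4 + 2 * X 0 * X 5 + X 4 * X 5 := by
    rw [eW, map_add, map_add, map_add, map_add, map_add, map_add, map_neg, map_neg, map_neg, hU2, hc_mul_zero pX23 _ 2 (by norm_num), hc_mul_zero pX33 _ 2 (by norm_num), hc_mul_zero pX2333 _ 2 (by norm_num), hc_mul pX2 _ 1 2 (by norm_num), hc_mul pX3 _ 1 2 (by norm_num), hc_mul pX23' _ 0 2 (by norm_num), hW1, hW0]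
    ring
  have ec : (((1 + X 1) * (1 + X 0 + X 2) * (1 + X 0 + X 3) * (1 + X 4) * (1 + X 5)) : MvPolynomial (Fin 6) ℚ) = ((1 + X 0 + X 2) * (1 + X 0 + X 3) * (1 + X 4) * (1 + X 5)) + X 1 * ((1 + X 0 + X 2) * (1 + X 0 + X 3) * (1 + X 4) * (1 + X 5)) := by ring
  have h5c : homogeneousComponent 5 (((1 + X 1) * (1 + X 0 + X 2) * (1 + X 0 + X 3) * (1 + X 4) * (1 + X 5)) : MvPolynomial (Fin 6) ℚ) = X 0 * X 0 * X 1 * X 4 * X 5 + X 0 * X 1 * X 2 * X 4 * X 5 + X 0 * X 1 * X 3 * X 4 * X 5 + X 1 * X 2 * X 3 * X 4 * X 5 := by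
    rw [ec, map_add, hU5, hc_mul pX1 _ 4 5 (by norm_num), hU4]
    ring
  have h1c : homogeneousComponent 1 (((1 + X 1) * (1 + X 0 + X 2) * (1 + X 0 + X 3) * (1 + X 4) * (1 + X 5)) : MvPolynomial (Fin 6) ℚ) = 2 * X 0 + X 1 + X 2 + X 3 + X 4 + X 5 := by
    rw [ec, map_add, hU1, hc_mul pX1 _ 0 1 (by norm_num), hU0]
    ring
  have e2 : (((1 + X 1) * (1 + X 0 + X 2) * (1 + X 0 + X 3) * (1 + X 4) * (1 + X 5) * geom 3 (X 0) * geom 3 (X 1)) : MvPolynomial (Fin 6) ℚ) = ((1 + X 0 + X 2) * (1 + X 0 + X 3) * (1 + X 4) * (1 + X 5) * geom 3 (X 0)) + (-(X 1 * X 1 * X 1 * X 1 * ((1 + X 0 + X 2) * (1 + X 0 + X 3) * (1 + X 4) * (1 + X 5) * geom 3 (X 0)))) := by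
    simp only [geom, Finset.sum_range_succ, Finset.sum_range_zero]
    ring
  have h2 : homogeneousComponent 3 (((1 + X 1) * (1 + X 0 + X 2) * (1 + X 0 + X 3) * (1 + X 4) * (1 + X 5) * geom 3 (X 0) * geom 3 (X 1)) : MvPolynomial (Fin 6) ℚ) = -X 0 * X 2 * X 3 + X 0 * X 4 * X 5 + X 2 * X 3 * X 4 + X 2 * X 3 * X 5 + X 2 * X 4 * X 5 + X 3 * X 4 * X 5 := by
    rw [e2, map_add, map_neg, hV3, hc_mul_zero pX14 _ 3 (by norm_num)]
    ring
  have e3 : (((1 + X 1) * (1 + X 0 + X 2) * (1 + X 0 + X 3) * (1 + X 4) * (1 + X 5) * geom 2 (X 1) * geom 2 (X 2) * geom 2 (X 3)) : MvPolynomial (Fin 6) ℚ) = ((1 + X 0 + X 2) * (1 + X 0 + X 3) * (1 + X 4) * (1 + X 5) * geom 2 (X 2) * geom 2 (X 3)) + X 1 * X 1 * X 1 * ((1 + X 0 + X 2) * (1 + X 0 + X 3) * (1 + X 4) * (1 + X 5) * geom 2 (X 2) * geom 2 (X 3)) := by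
    simp only [geom, Finset.sum_range_succ, Finset.sum_range_zero]
    ring
  have h3 : homogeneousComponent 2 (((1 + X 1) * (1 + X 0 + X 2) * (1 + X 0 + X 3) * (1 + X 4) * (1 + X 5) * geom 2 (X 1) * geom 2 (X 2) * geom 2 (X 3)) : MvPolynomial (Fin 6) ℚ) = X 0 * X 0 - X 0 * X 2 - X 0 * X 3 + 2 * X 0 * X 4 + 2 * X 0 * X 5 + X 4 * X 5 := by
    rw [e3, map_add, hW2, hc_mul_zero pX13 _ 2 (by norm_num)]
    ring
  rw [h5c, h2, h3, h1c]
  ring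
end
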